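/- Let G be a very basic graph. Then Breaker has a strategy to prevent Maker from claiming all three edges of any triangle in the unbiased Maker-Breaker game on the edge set of G, even if Maker is allowed to claim two edges in the very first round (and one edge per round thereafter). -/

import Mathlib

namespace TournamentGame

variable {V : Type*} [DecidableEq V]

/-- The underlying undirected edges of a set of oriented edges. -/
def undirect (M : Finset (V × V)) : Finset (Sym2 V) :=
  M.image fun p => s(p.1, p.2)

/-- `MakerWin X F b M B` : in the (1:b) Maker-Breaker game on board `X`, with Maker
having claimed `M`, Breaker having claimed `B`, and Maker to move, Maker has a strategy
to claim all edges of some winning set (i.e. reach a position with `F` on her edges). -/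
inductive MakerWin (X : Finset (Sym2 V)) (F : Finset (Sym2 V) → Prop) (b : ℕ) :
    Finset (Sym2 V) → Finset (Sym2 V) → Prop
  | win (M B : Finset (Sym2 V)) : F M → MakerWin X F b M B
  | move (M B : Finset (Sym2 V)) (e : Sym2 V) (heX : e ∈ X) (hefree : e ∉ M ∪ B)
      (h : ∀ B' : Finset (Sym2 V), B' ⊆ X \ (insert e M ∪ B) →
        B'.card = min b (X \ (insert e M ∪ B)).card →
        MakerWin X F b (insert e M) (B ∪ B')) :
      MakerWin X F b M B

/-- `BreakerBlock X F b M B` : Maker to move; Breaker has a strategy ensuring that `F`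
never holds on Maker's edge set. -/
inductive BreakerBlock (X : Finset (Sym2 V)) (F : Finset (Sym2 V) → Prop) (b : ℕ) :
    Finset (Sym2 V) → Finset (Sym2 V) → Prop
  | step (M B : Finset (Sym2 V)) (hF : ¬ F M) (resp : Sym2 V → Finset (Sym2 V))
      (hsub : ∀ e ∈ X, e ∉ M ∪ B → resp e ⊆ X \ (insert e M ∪ B))
      (hcard : ∀ e ∈ X, e ∉ M ∪ B → (resp e).card = min b (X \ (insert e M ∪ B)).card)
      (h : ∀ e ∈ X, e ∉ M ∪ B → BreakerBlock X F b (insert e M) (B ∪ resp e)) :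
      BreakerBlock X F b M B

/-- Oriented (tournament-game) version of `MakerWin`: Maker claims an edge together with
an orientation; her position is a set of oriented edges. -/
inductive OMakerWin (X : Finset (Sym2 V)) (F : Finset (V × V) → Prop) (b : ℕ) :
    Finset (V × V) → Finset (Sym2 V) → Prop
  | win (M : Finset (V × V)) (B : Finset (Sym2 V)) : F M → OMakerWin X F b M B
  | move (M : Finset (V × V)) (B : Finset (Sym2 V)) (x y : V)
      (heX : s(x, y) ∈ X) (hefree : s(x, y) ∉ undirect M ∪ B)
      (h : ∀ B' : Finset (Sym2 V), B' ⊆ X \ (insert s(x, y) (undirect M) ∪ B) →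
        B'.card = min b (X \ (insert s(x, y) (undirect M) ∪ B)).card →
        OMakerWin X F b (insert (x, y) M) (B ∪ B')) :
      OMakerWin X F b M B

/-- Oriented version of `BreakerBlock`. -/
inductive OBreakerBlock (X : Finset (Sym2 V)) (F : Finset (V × V) → Prop) (b : ℕ) :
    Finset (V × V) → Finset (Sym2 V) → Prop
  | step (M : Finset (V × V)) (B : Finset (Sym2 V)) (hF : ¬ F M)
      (resp : V → V → Finset (Sym2 V))
      (hsub : ∀ x y : V, s(x, y) ∈ X → s(x, y) ∉ undirect M ∪ B →
        resp x y ⊆ X \ (insert s(x, y) (undirect M) ∪ B))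
      (hcard : ∀ x y : V, s(x, y) ∈ X → s(x, y) ∉ undirect M ∪ B →
        (resp x y).card = min b (X \ (insert s(x, y) (undirect M) ∪ B)).card)
      (h : ∀ x y : V, s(x, y) ∈ X → s(x, y) ∉ undirect M ∪ B →
        OBreakerBlock X F b (insert (x, y) M) (B ∪ resp x y)) :
      OBreakerBlock X F b M B

/-- Position with Breaker to move, in the unoriented game: Breaker can respond and
then keep blocking forever. -/
def BreakerTurn (X : Finset (Sym2 V)) (F : Finset (Sym2 V) → Prop) (b : ℕ)
    (M B : Finset (Sym2 V)) : Prop :=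
  ¬ F M ∧ ∃ B' : Finset (Sym2 V), B' ⊆ X \ (M ∪ B) ∧
    B'.card = min b (X \ (M ∪ B)).card ∧ BreakerBlock X F b M (B ∪ B')

/-- Position with Breaker to move, in the oriented game. -/
def OBreakerTurn (X : Finset (Sym2 V)) (F : Finset (V × V) → Prop) (b : ℕ)
    (M : Finset (V × V)) (B : Finset (Sym2 V)) : Prop :=
  ¬ F M ∧ ∃ B' : Finset (Sym2 V), B' ⊆ X \ (undirect M ∪ B) ∧
    B'.card = min b (X \ (undirect M ∪ B)).card ∧ OBreakerBlock X F b M (B ∪ B')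

/-- Winning sets of the triangle game. -/
def HasTriangle (M : Finset (Sym2 V)) : Prop :=
  ∃ x y z : V, x ≠ y ∧ y ≠ z ∧ x ≠ z ∧ s(x, y) ∈ M ∧ s(y, z) ∈ M ∧ s(x, z) ∈ M

/-- Maker's oriented edges contain a cyclic (directed) triangle. -/
def HasCyclicTriangle (M : Finset (V × V)) : Prop :=
  ∃ x y z : V, x ≠ y ∧ y ≠ z ∧ x ≠ z ∧ (x, y) ∈ M ∧ (y, z) ∈ M ∧ (z, x) ∈ M

/-- Maker's oriented edges contain an acyclic (transitive) triangle. -/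
def HasAcyclicTriangle (M : Finset (V × V)) : Prop :=
  ∃ x y z : V, x ≠ y ∧ y ≠ z ∧ x ≠ z ∧ (x, y) ∈ M ∧ (y, z) ∈ M ∧ (x, z) ∈ M

/-- A tournament on `Fin k`, given by its arc relation. -/
def IsTournament {k : ℕ} (T : Fin k → Fin k → Prop) : Prop :=
  (∀ i, ¬ T i i) ∧ ∀ i j : Fin k, i ≠ j → (T i j ↔ ¬ T j i)

/-- Maker's oriented edges contain a copy of the tournament `T`. -/
def HasTCopy {k : ℕ} (T : Fin k → Fin k → Prop) (M : Finset (V × V)) : Prop :=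
  ∃ f : Fin k → V, Function.Injective f ∧ ∀ i j : Fin k, T i j → (f i, f j) ∈ M

/-- The edge set of the complete graph `K_n`. -/
def completeEdges (n : ℕ) : Finset (Sym2 (Fin n)) :=
  Finset.univ.filter fun e => ¬ e.IsDiag

/-- The edge set of the Turán graph `T_{n,k}` : classes are residues mod `k`. -/
def turanEdges (n k : ℕ) : Finset (Sym2 (Fin n)) :=
  Finset.univ.filter fun e => ¬ (e.map fun v : Fin n => v.val % k).IsDiag

/-- `A` contains a good copy of `K_k` (all vertices in distinct classes of `T_{n,k}`). -/
def GoodCopy (n k : ℕ) (A : Finset (Sym2 (Fin n))) : Prop :=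
  ∃ f : Fin k → Fin n, Function.Injective f ∧
    (∀ i j : Fin k, i ≠ j → (f i).val % k ≠ (f j).val % k) ∧
    (∀ i j : Fin k, i ≠ j → s(f i, f j) ∈ A)

open Classical in
/-- Probability that a `p`-random subset `A` of `E` (each element kept independently with
probability `p`) satisfies `P`. This is the model `G(E, p)`. -/
noncomputable def edgeProb {α : Type*} [DecidableEq α] (E : Finset α) (p : ℝ)
    (P : Finset α → Prop) : ℝ :=
  ∑ A ∈ E.powerset, if P A then p ^ A.card * (1 - p) ^ (E.card - A.card) else 0

open Classical in
/-- Probability that a uniformly random `M`-element subset of `E` satisfies `P`.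
This is the model `G(E, M)`. -/
noncomputable def uniformProb {α : Type*} [DecidableEq α] (E : Finset α) (M : ℕ)
    (P : Finset α → Prop) : ℝ :=
  ((E.powerset.filter fun A => A.card = M ∧ P A).card : ℝ) /
    ((E.powerset.filter fun A => A.card = M).card : ℝ)

/-- The three edges of a triangle on `x`, `y`, `z`. -/
def triEdges (x y z : V) : Finset (Sym2 V) := {s(x, y), s(y, z), s(x, z)}

/-- `x`, `y`, `z` form a triangle of the graph with edge set `A`. -/
def IsTriangleIn (A : Finset (Sym2 V)) (x y z : V) : Prop :=
  x ≠ y ∧ y ≠ z ∧ x ≠ z ∧ s(x, y) ∈ A ∧ s(y, z) ∈ A ∧ s(x, z) ∈ A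

/-- The triangles of `A`, each recorded as its set of three edges: the vertex set of `T_A`. -/
def TriSets (A : Finset (Sym2 V)) : Set (Finset (Sym2 V)) :=
  {t | ∃ x y z : V, IsTriangleIn A x y z ∧ t = triEdges x y z}

/-- `C` is a triangle collection: every edge lies in a triangle and the graph `T_C` of
triangles (adjacent iff sharing an edge) is connected. -/
def IsTriangleCollection (C : Finset (Sym2 V)) : Prop :=
  (∀ e ∈ C, ∃ x y z : V, IsTriangleIn C x y z ∧ e ∈ triEdges x y z) ∧
  ∀ t ∈ TriSets C, ∀ t' ∈ TriSets C,
    Relation.ReflTransGen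
      (fun a b => a ∈ TriSets C ∧ b ∈ TriSets C ∧ (a ∩ b).Nonempty) t t'

/-- Adjacency of `K₃⁺`: a triangle on `{0,1,2}` with a pendant edge `{2,3}`. -/
def K3plusAdj (a b : Fin 4) : Prop :=
  (a.val < 3 ∧ b.val < 3 ∧ a ≠ b) ∨ (a.val = 2 ∧ b.val = 3) ∨ (a.val = 3 ∧ b.val = 2)

/-- Adjacency of the path on `Fin m`. -/
def pathAdj {m : ℕ} (a b : Fin m) : Prop := a.val + 1 = b.val ∨ b.val + 1 = a.val

/-- `C` is very basic: `T_C` is (isomorphic to) a subgraph of `K₃⁺` or of a path `P_m`. -/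
def VeryBasic (C : Finset (Sym2 V)) : Prop :=
  (∃ φ : TriSets C → Fin 4, Function.Injective φ ∧
    ∀ t t' : TriSets C, t ≠ t' → ((t : Finset (Sym2 V)) ∩ (t' : Finset (Sym2 V))).Nonempty →
      K3plusAdj (φ t) (φ t')) ∨
  (∃ m : ℕ, ∃ φ : TriSets C → Fin m, Function.Injective φ ∧
    ∀ t t' : TriSets C, t ≠ t' → ((t : Finset (Sym2 V)) ∩ (t' : Finset (Sym2 V))).Nonempty →
      pathAdj (φ t) (φ t'))

/-- `C` is basic: there are distinct edges `e₁, e₂` with `C - eᵢ` very basic for both. -/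
def Basic (C : Finset (Sym2 V)) : Prop :=
  ∃ e₁ ∈ C, ∃ e₂ ∈ C, e₁ ≠ e₂ ∧ VeryBasic (C.erase e₁) ∧ VeryBasic (C.erase e₂)

open Classical in
/-- The set of non-isolated vertices of the graph with edge set `C`. -/
noncomputable def support [Fintype V] (C : Finset (Sym2 V)) : Finset V :=
  Finset.univ.filter fun v => ∃ e ∈ C, v ∈ e

open Classical in
/-- Degree of `v` in the graph with edge set `C`. -/
noncomputable def degreeIn (C : Finset (Sym2 V)) (v : V) : ℕ :=
  (C.filter fun e => v ∈ e).card

/-- The maximum density `m(C) = max_{H ⊆ C} e(H)/v(H)` is (strictly) less than `r`. -/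
def MaxDensityLt [Fintype V] (C : Finset (Sym2 V)) (r : ℝ) : Prop :=
  ∀ D ⊆ C, D.Nonempty → (D.card : ℝ) / ((support D).card : ℝ) < r

/-- The edge set of the `k`-wheel: a cycle on `{0, …, k-1} ⊆ Fin (k+1)` together with
all edges to the center, the vertex `k`. -/
def wheelEdges (k : ℕ) : Finset (Sym2 (Fin (k + 1))) :=
  ((Finset.univ : Finset (Fin k)).image fun i =>
    s((⟨i.val, by have := i.2; omega⟩ : Fin (k + 1)),
      (⟨(i.val + 1) % k, by have := i.2; exact Nat.lt_succ_of_lt (Nat.mod_lt _ (by omega))⟩ :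
        Fin (k + 1)))) ∪
  ((Finset.univ : Finset (Fin k)).image fun i =>
    s((⟨i.val, by have := i.2; omega⟩ : Fin (k + 1)), (Fin.last k)))

/-! ### Auxiliary development -/

section Aux

variable {V : Type*} [DecidableEq V]

open Classical

lemma mem_triEdges_iff {x y z : V} {e : Sym2 V} :
    e ∈ triEdges x y z ↔ e = s(x, y) ∨ e = s(y, z) ∨ e = s(x, z) := by
  simp [triEdges]

lemma triEdges_card {x y z : V} (hxy : x ≠ y) (hyz : y ≠ z) (hxz : x ≠ z) :
    (triEdges x y z).card = 3 := by
  rw [triEdges]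
  rw [Finset.card_insert_of_notMem, Finset.card_insert_of_notMem, Finset.card_singleton]
  · simp only [Finset.mem_singleton, Sym2.eq_iff]
    tauto
  · simp only [Finset.mem_insert, Finset.mem_singleton, Sym2.eq_iff]
    tauto

lemma tri_card_of_mem {C : Finset (Sym2 V)} {t : Finset (Sym2 V)} (ht : t ∈ TriSets C) :
    t.card = 3 := by
  obtain ⟨x, y, z, ⟨hxy, hyz, hxz, -, -, -⟩, rfl⟩ := ht
  exact triEdges_card hxy hyz hxz

lemma tri_edges_mem {C : Finset (Sym2 V)} {t : Finset (Sym2 V)} (ht : t ∈ TriSets C) :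
    ∀ e ∈ t, e ∈ C := by
  obtain ⟨x, y, z, ⟨hxy, hyz, hxz, h1, h2, h3⟩, rfl⟩ := ht
  intro e he
  rcases mem_triEdges_iff.1 he with rfl | rfl | rfl <;> assumption

lemma tri_subset {C : Finset (Sym2 V)} {t : Finset (Sym2 V)} (ht : t ∈ TriSets C) :
    t ⊆ C := fun _ he => tri_edges_mem ht _ he

lemma mem_vert_of_mem_triEdges {x y z : V} {e : Sym2 V} (he : e ∈ triEdges x y z) :
    ∀ v ∈ e, v = x ∨ v = y ∨ v = z := by
  intro v hv
  rcases mem_triEdges_iff.1 he with rfl | rfl | rfl <;>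
    rcases Sym2.mem_iff.1 hv with rfl | rfl <;> tauto

lemma triEdges_eq_of_vertset {x y z p q r : V}
    (hxy : x ≠ y) (hyz : y ≠ z) (hxz : x ≠ z)
    (hpq : p ≠ q) (hqr : q ≠ r) (hpr : p ≠ r)
    (hsub : ∀ v : V, (v = x ∨ v = y ∨ v = z) → (v = p ∨ v = q ∨ v = r)) :
    triEdges x y z = triEdges p q r := by
  -- first: the vertex sets are equal (both have card 3, one includes the other)
  have hsub' : ({x, y, z} : Finset V) ⊆ {p, q, r} := by
    intro v hv
    simp only [Finset.mem_insert, Finset.mem_singleton] at hv ⊢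
    exact hsub v hv
  have hc1 : ({x, y, z} : Finset V).card = 3 := by
    rw [Finset.card_insert_of_notMem, Finset.card_insert_of_notMem, Finset.card_singleton]
    · simpa using hyz
    · simp only [Finset.mem_insert, Finset.mem_singleton]
      tauto
  have hc2 : ({p, q, r} : Finset V).card = 3 := by
    rw [Finset.card_insert_of_notMem, Finset.card_insert_of_notMem, Finset.card_singleton]
    · simpa using hqr
    · simp only [Finset.mem_insert, Finset.mem_singleton]
      tauto
  have heq : ({x, y, z} : Finset V) = {p, q, r} :=
    Finset.eq_of_subset_of_card_le hsub' (by omega)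
  have hmem : ∀ v : V, (v = x ∨ v = y ∨ v = z) ↔ (v = p ∨ v = q ∨ v = r) := by
    intro v
    have := Finset.ext_iff.1 heq v
    simpa using this
  -- characterization of membership in triEdges
  have hchar : ∀ (a b c : V), a ≠ b → b ≠ c → a ≠ c → ∀ e : Sym2 V,
      (e ∈ triEdges a b c ↔ ¬ e.IsDiag ∧ ∀ v ∈ e, v = a ∨ v = b ∨ v = c) := by
    intro a b c hab hbc hac e
    constructor
    · intro he
      refine ⟨?_, mem_vert_of_mem_triEdges he⟩
      rcases mem_triEdges_iff.1 he with rfl | rfl | rfl <;>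
        simpa [Sym2.isDiag_iff_proj_eq] using (by assumption : _ ≠ _)
    · rintro ⟨hd, hv⟩
      obtain ⟨u, w⟩ := e
      have hu : u = a ∨ u = b ∨ u = c := hv u (by simp)
      have hw : w = a ∨ w = b ∨ w = c := hv w (by simp)
      have huw : u ≠ w := by
        intro h; exact hd (by simp [h, Sym2.isDiag_iff_proj_eq])
      rw [mem_triEdges_iff]
      rcases hu with rfl | rfl | rfl <;> rcases hw with rfl | rfl | rfl <;>
        simp_all [Sym2.eq_iff] <;> tauto
  ext e
  rw [hchar x y z hxy hyz hxz, hchar p q r hpq hqr hpr]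
  constructor
  · rintro ⟨hd, hv⟩; exact ⟨hd, fun v hve => (hmem v).1 (hv v hve)⟩
  · rintro ⟨hd, hv⟩; exact ⟨hd, fun v hve => (hmem v).2 (hv v hve)⟩

end Aux
section Aux2

variable {V : Type*} [DecidableEq V]

lemma verts_covered {x y z : V} {a b : Sym2 V}
    (ha : a ∈ triEdges x y z) (hb : b ∈ triEdges x y z) (hab : a ≠ b) :
    ∀ v : V, (v = x ∨ v = y ∨ v = z) → v ∈ a ∨ v ∈ b := by
  intro v hv
  rcases mem_triEdges_iff.1 ha with rfl | rfl | rfl <;>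
    rcases mem_triEdges_iff.1 hb with rfl | rfl | rfl <;>
      first
      | exact absurd rfl hab
      | (rcases hv with rfl | rfl | rfl <;> simp [Sym2.mem_iff] <;> tauto)

lemma tri_eq_of_two_shared {C : Finset (Sym2 V)} {t t' : Finset (Sym2 V)}
    (ht : t ∈ TriSets C) (ht' : t' ∈ TriSets C) {a b : Sym2 V} (hab : a ≠ b)
    (hat : a ∈ t) (hat' : a ∈ t') (hbt : b ∈ t) (hbt' : b ∈ t') : t = t' := by
  obtain ⟨x, y, z, ⟨hxy, hyz, hxz, -, -, -⟩, rfl⟩ := ht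
  obtain ⟨p, q, r, ⟨hpq, hqr, hpr, -, -, -⟩, rfl⟩ := ht'
  refine triEdges_eq_of_vertset hxy hyz hxz hpq hqr hpr ?_
  intro v hv
  rcases verts_covered hat hbt hab v hv with hva | hvb
  · exact mem_vert_of_mem_triEdges hat' v hva
  · exact mem_vert_of_mem_triEdges hbt' v hvb

lemma tri_inter_subsingleton {C : Finset (Sym2 V)} {t t' : Finset (Sym2 V)}
    (ht : t ∈ TriSets C) (ht' : t' ∈ TriSets C) (hne : t ≠ t') :
    ∀ a ∈ t ∩ t', ∀ b ∈ t ∩ t', a = b := by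
  intro a ha b hb
  simp only [Finset.mem_inter] at ha hb
  by_contra hab
  exact hne (tri_eq_of_two_shared ht ht' hab ha.1 ha.2 hb.1 hb.2)

lemma tri_inter_card_le_one {C : Finset (Sym2 V)} {t t' : Finset (Sym2 V)}
    (ht : t ∈ TriSets C) (ht' : t' ∈ TriSets C) (hne : t ≠ t') :
    (t ∩ t').card ≤ 1 :=
  Finset.card_le_one.2 (fun a ha b hb => tri_inter_subsingleton ht ht' hne a ha b hb)

lemma hit_card_le_one {t : Finset (Sym2 V)} {F : Finset (Sym2 V)}
    (hF : F.card = 2) (hnsub : ¬ F ⊆ t) : (t ∩ F).card ≤ 1 := by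
  by_contra h
  push_neg at h
  have hsub : t ∩ F ⊆ F := Finset.inter_subset_right
  have hle : F.card ≤ (t ∩ F).card := by omega
  have : t ∩ F = F := Finset.eq_of_subset_of_card_le hsub hle
  exact hnsub (by rw [← this]; exact Finset.inter_subset_left)

lemma pair_card_two {e₁ e₂ : Sym2 V} (h : e₁ ≠ e₂) : ({e₁, e₂} : Finset (Sym2 V)).card = 2 := by
  rw [Finset.card_insert_of_notMem (by simpa using h), Finset.card_singleton]

lemma not_hasTriangle_pair {e₁ e₂ : Sym2 V} : ¬ HasTriangle ({e₁, e₂} : Finset (Sym2 V)) := by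
  rintro ⟨x, y, z, hxy, hyz, hxz, h1, h2, h3⟩
  have hsub : triEdges x y z ⊆ ({e₁, e₂} : Finset (Sym2 V)) := by
    intro e he
    rcases mem_triEdges_iff.1 he with rfl | rfl | rfl <;> assumption
  have h3' := triEdges_card hxy hyz hxz
  have hle := Finset.card_le_card hsub
  have : ({e₁, e₂} : Finset (Sym2 V)).card ≤ 2 := Finset.card_insert_le _ _ |>.trans (by simp)
  omega

end Aux2
section GameA

variable {V : Type*} [DecidableEq V]

open Classical

/-- Invariant for Breaker's pairing strategy. -/
def PairInv (X M B : Finset (Sym2 V)) (Pr : Finset (Finset (Sym2 V))) : Prop :=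
  M ⊆ X ∧ B ⊆ X ∧ Disjoint M B ∧
  (∀ p ∈ Pr, 2 ≤ p.card ∧ p ⊆ X \ (M ∪ B)) ∧
  (∀ p ∈ Pr, ∀ q ∈ Pr, p ≠ q → Disjoint p q) ∧
  (∀ x y z : V, IsTriangleIn X x y z →
      (∃ b ∈ B, b ∈ triEdges x y z) ∨ ∃ p ∈ Pr, p ⊆ triEdges x y z)

lemma pairInv_not_hasTriangle {X M B : Finset (Sym2 V)} {Pr : Finset (Finset (Sym2 V))}
    (hInv : PairInv X M B Pr) : ¬ HasTriangle M := by
  obtain ⟨hMX, hBX, hMB, hPr, hdisj, hcov⟩ := hInv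
  rintro ⟨x, y, z, hxy, hyz, hxz, h1, h2, h3⟩
  have htri : IsTriangleIn X x y z :=
    ⟨hxy, hyz, hxz, hMX h1, hMX h2, hMX h3⟩
  have hsubM : triEdges x y z ⊆ M := by
    intro e he
    rcases mem_triEdges_iff.1 he with rfl | rfl | rfl <;> assumption
  rcases hcov x y z htri with ⟨b, hbB, hbt⟩ | ⟨p, hpPr, hpt⟩
  · exact (Finset.disjoint_left.1 hMB) (hsubM hbt) hbB
  · have h2le : 2 ≤ p.card := (hPr p hpPr).1
    have : p.Nonempty := Finset.card_pos.1 (by omega)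
    obtain ⟨a, ha⟩ := this
    have haM : a ∈ M := hsubM (hpt ha)
    have := (hPr p hpPr).2 ha
    simp only [Finset.mem_sdiff, Finset.mem_union] at this
    exact this.2 (Or.inl haM)

lemma gameA_key {X M B : Finset (Sym2 V)} {Pr : Finset (Finset (Sym2 V))}
    (hInv : PairInv X M B Pr) {e : Sym2 V} (heX : e ∈ X) (hefree : e ∉ M ∪ B) :
    ∃ B' : Finset (Sym2 V), B' ⊆ X \ (insert e M ∪ B) ∧
      B'.card = min 1 (X \ (insert e M ∪ B)).card ∧
      ∃ Pr' : Finset (Finset (Sym2 V)), PairInv X (insert e M) (B ∪ B') Pr' := by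
  obtain ⟨hMX, hBX, hMB, hPr, hdisj, hcov⟩ := hInv
  simp only [Finset.mem_union, not_or] at hefree
  by_cases hne : (X \ (insert e M ∪ B)).Nonempty
  · -- there is a free edge left; Breaker claims one
    have hf : ∃ f, f ∈ X \ (insert e M ∪ B) ∧ ∀ q ∈ Pr, e ∈ q → f ∈ q := by
      by_cases hp : ∃ p ∈ Pr, e ∈ p
      · obtain ⟨p, hpPr, hep⟩ := hp
        have hcard2 : 2 ≤ p.card := (hPr p hpPr).1
        have hpe : (p.erase e).Nonempty := by
          rw [← Finset.card_pos, Finset.card_erase_of_mem hep]; omega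
        obtain ⟨f, hf⟩ := hpe
        have hfp : f ∈ p := Finset.mem_of_mem_erase hf
        have hfe : f ≠ e := Finset.ne_of_mem_erase hf
        have hffree : f ∈ X \ (M ∪ B) := (hPr p hpPr).2 hfp
        simp only [Finset.mem_sdiff, Finset.mem_union, not_or] at hffree
        refine ⟨f, ?_, ?_⟩
        · simp only [Finset.mem_sdiff, Finset.mem_union, Finset.mem_insert, not_or]
          exact ⟨hffree.1, ⟨fun h => hfe h, hffree.2.1⟩, hffree.2.2⟩
        · intro q hqPr heq
          have : p = q := by
            by_contra hpq
            exact (Finset.disjoint_left.1 (hdisj p hpPr q hqPr hpq)) hep heq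
          rw [← this]; exact hfp
      · obtain ⟨f, hf⟩ := hne
        refine ⟨f, hf, fun q hqPr heq => absurd ⟨q, hqPr, heq⟩ hp⟩
    obtain ⟨f, hffree, hfkey⟩ := hf
    have hfX : f ∈ X := (Finset.mem_sdiff.1 hffree).1
    have hfnm : f ∉ insert e M ∪ B := (Finset.mem_sdiff.1 hffree).2
    simp only [Finset.mem_union, Finset.mem_insert, not_or] at hfnm
    refine ⟨{f}, by simpa using hffree, ?_, Pr.filter (fun q => e ∉ q ∧ f ∉ q), ?_⟩
    · rw [Finset.card_singleton]
      have : 0 < (X \ (insert e M ∪ B)).card := Finset.card_pos.2 ⟨f, hffree⟩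
      omega
    · refine ⟨?_, ?_, ?_, ?_, ?_, ?_⟩
      · exact Finset.insert_subset heX hMX
      · exact Finset.union_subset hBX (by simpa using hfX)
      · rw [Finset.disjoint_left]
        intro a haM haB
        simp only [Finset.mem_insert] at haM
        simp only [Finset.mem_union, Finset.mem_singleton] at haB
        rcases haB with haB | rfl
        · rcases haM with rfl | haM
          · exact hefree.2 haB
          · exact (Finset.disjoint_left.1 hMB) haM haB
        · rcases haM with rfl | haM
          · exact hfnm.1.1 rfl
          · exact hfnm.1.2 haM
      · intro p hp
        rw [Finset.mem_filter] at hp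
        obtain ⟨hpPr, hep, hfp⟩ := hp
        refine ⟨(hPr p hpPr).1, ?_⟩
        intro a hap
        have := (hPr p hpPr).2 hap
        simp only [Finset.mem_sdiff, Finset.mem_union, not_or,
          Finset.mem_insert, Finset.mem_singleton] at this ⊢
        refine ⟨this.1, ⟨fun h => hep (h ▸ hap), this.2.1⟩, this.2.2, fun h => hfp (h ▸ hap)⟩
      · intro p hp q hq hpq
        rw [Finset.mem_filter] at hp hq
        exact hdisj p hp.1 q hq.1 hpq
      · intro x y z htri
        rcases hcov x y z htri with ⟨b, hbB, hbt⟩ | ⟨p, hpPr, hpt⟩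
        · exact Or.inl ⟨b, Finset.mem_union_left _ hbB, hbt⟩
        · by_cases hmem : e ∉ p ∧ f ∉ p
          · exact Or.inr ⟨p, Finset.mem_filter.2 ⟨hpPr, hmem⟩, hpt⟩
          · -- the pair p was destroyed, but then f ∈ p, so B ∪ {f} hits the triangle
            have hfp : f ∈ p := by
              by_cases hep : e ∈ p
              · exact hfkey p hpPr hep
              · push_neg at hmem
                exact hmem hep
            exact Or.inl ⟨f, Finset.mem_union_right _ (Finset.mem_singleton_self f), hpt hfp⟩
  · -- no free edge remains
    have hempty : X \ (insert e M ∪ B) = ∅ := Finset.not_nonempty_iff_eq_empty.1 hne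
    refine ⟨∅, by simp, by rw [hempty]; simp, ∅, ?_⟩
    have hPrempty : ∀ q ∈ Pr, False := by
      intro q hqPr
      have h2le : 2 ≤ q.card := (hPr q hqPr).1
      have hsub : q ⊆ insert e (X \ (insert e M ∪ B)) := by
        intro a haq
        have := (hPr q hqPr).2 haq
        simp only [Finset.mem_sdiff, Finset.mem_union, not_or, Finset.mem_insert] at this ⊢
        by_cases hae : a = e
        · exact Or.inl hae
        · exact Or.inr ⟨this.1, ⟨fun h => hae (by simpa using h), this.2.1⟩, this.2.2⟩
      rw [hempty] at hsub
      have := Finset.card_le_card hsub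
      simp at this
      omega
    refine ⟨Finset.insert_subset heX hMX, by simpa using hBX, ?_, by simp, by simp, ?_⟩
    · rw [Finset.disjoint_left]
      intro a haM haB
      simp only [Finset.mem_insert] at haM
      simp only [Finset.union_empty] at haB
      rcases haM with rfl | haM
      · exact hefree.2 haB
      · exact (Finset.disjoint_left.1 hMB) haM haB
    · intro x y z htri
      rcases hcov x y z htri with ⟨b, hbB, hbt⟩ | ⟨p, hpPr, hpt⟩
      · exact Or.inl ⟨b, by simpa using hbB, hbt⟩
      · exact (hPrempty p hpPr).elim

lemma gameA {X : Finset (Sym2 V)} :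
    ∀ (n : ℕ) (M B : Finset (Sym2 V)) (Pr : Finset (Finset (Sym2 V))),
      PairInv X M B Pr → (X \ (M ∪ B)).card ≤ n →
      BreakerBlock X HasTriangle 1 M B := by
  intro n
  induction n with
  | zero =>
    intro M B Pr hInv hn
    refine BreakerBlock.step M B (pairInv_not_hasTriangle hInv) (fun _ => ∅) ?_ ?_ ?_ <;>
    · intro e heX hefree
      exfalso
      have : e ∈ X \ (M ∪ B) := Finset.mem_sdiff.2 ⟨heX, hefree⟩
      have : 0 < (X \ (M ∪ B)).card := Finset.card_pos.2 ⟨e, this⟩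
      omega
  | succ n ih =>
    intro M B Pr hInv hn
    have key : ∀ e : Sym2 V, e ∈ X ∧ e ∉ M ∪ B →
        ∃ B' : Finset (Sym2 V), B' ⊆ X \ (insert e M ∪ B) ∧
          B'.card = min 1 (X \ (insert e M ∪ B)).card ∧
          ∃ Pr' : Finset (Finset (Sym2 V)), PairInv X (insert e M) (B ∪ B') Pr' :=
      fun e he => gameA_key hInv he.1 he.2
    set resp : Sym2 V → Finset (Sym2 V) :=
      fun e => if h : e ∈ X ∧ e ∉ M ∪ B then (key e h).choose else ∅ with hresp
    refine BreakerBlock.step M B (pairInv_not_hasTriangle hInv) resp ?_ ?_ ?_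
    · intro e heX hefree
      rw [hresp]
      simp only [dif_pos (And.intro heX hefree)]
      exact (key e ⟨heX, hefree⟩).choose_spec.1
    · intro e heX hefree
      rw [hresp]
      simp only [dif_pos (And.intro heX hefree)]
      exact (key e ⟨heX, hefree⟩).choose_spec.2.1
    · intro e heX hefree
      rw [hresp]
      simp only [dif_pos (And.intro heX hefree)]
      obtain ⟨Pr', hPr'⟩ := (key e ⟨heX, hefree⟩).choose_spec.2.2
      refine ih (insert e M) _ Pr' hPr' ?_
      have hsub : X \ (insert e M ∪ (B ∪ (key e ⟨heX, hefree⟩).choose)) ⊆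
          (X \ (M ∪ B)).erase e := by
        intro a ha
        simp only [Finset.mem_sdiff, Finset.mem_union, Finset.mem_insert, not_or] at ha
        simp only [Finset.mem_erase, Finset.mem_sdiff, Finset.mem_union, not_or]
        exact ⟨ha.2.1.1, ha.1, ha.2.1.2, ha.2.2.1⟩
      have hcard := Finset.card_le_card hsub
      have hce : e ∈ X \ (M ∪ B) := Finset.mem_sdiff.2 ⟨heX, hefree⟩
      rw [Finset.card_erase_of_mem hce] at hcard
      omega
end GameA
section DtoPi

variable {V : Type*} [DecidableEq V]

open Classical

lemma DtoPi {C : Finset (Sym2 V)} {e₁ e₂ g : Sym2 V}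
    (he₁ : e₁ ∈ C) (he₂ : e₂ ∈ C) (hne : e₁ ≠ e₂)
    (hgC : g ∈ C) (hg1 : g ≠ e₁) (hg2 : g ≠ e₂)
    (D : Finset (Sym2 V) → Finset (Sym2 V))
    (hDsub : ∀ t ∈ TriSets C, g ∉ t → D t ⊆ t)
    (hDcard : ∀ t ∈ TriSets C, g ∉ t → (D t).card ≤ 1)
    (hDhit : ∀ t ∈ TriSets C, g ∉ t → t ∩ {e₁, e₂} ⊆ D t)
    (hDcov : ∀ t ∈ TriSets C, ∀ t' ∈ TriSets C, g ∉ t → g ∉ t' → t ≠ t' →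
      ∀ s ∈ t ∩ t', s ∉ ({e₁, e₂} : Finset (Sym2 V)) → s ∈ D t ∪ D t') :
    BreakerTurn C HasTriangle 1 {e₁, e₂} ∅ := by
  classical
  refine ⟨not_hasTriangle_pair, {g}, ?_, ?_, ?_⟩
  · simp only [Finset.singleton_subset_iff, Finset.union_empty, Finset.mem_sdiff,
      Finset.mem_insert, Finset.mem_singleton, not_or]
    exact ⟨hgC, hg1, hg2⟩
  · rw [Finset.card_singleton]
    have hgmem : g ∈ C \ ({e₁, e₂} ∪ ∅) := by
      simp only [Finset.union_empty, Finset.mem_sdiff, Finset.mem_insert,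
        Finset.mem_singleton, not_or]
      exact ⟨hgC, hg1, hg2⟩
    have : 0 < (C \ ({e₁, e₂} ∪ ∅)).card := Finset.card_pos.2 ⟨g, hgmem⟩
    omega
  · set Pr : Finset (Finset (Sym2 V)) :=
      (C.powerset.filter (fun t => t ∈ TriSets C ∧ g ∉ t)).image (fun t => t \ D t) with hPr
    have hmemPr : ∀ p ∈ Pr, ∃ t, t ∈ TriSets C ∧ g ∉ t ∧ p = t \ D t := by
      intro p hp
      rw [hPr, Finset.mem_image] at hp
      obtain ⟨t, ht, rfl⟩ := hp
      rw [Finset.mem_filter] at ht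
      exact ⟨t, ht.2.1, ht.2.2, rfl⟩
    have hhit : ∀ t, t ∈ TriSets C → g ∉ t → ∀ a ∈ t \ D t,
        a ∈ C ∧ a ≠ e₁ ∧ a ≠ e₂ ∧ a ≠ g := by
      intro t ht hgt a ha
      rw [Finset.mem_sdiff] at ha
      refine ⟨tri_edges_mem ht a ha.1, ?_, ?_, ?_⟩
      · rintro rfl
        exact ha.2 (hDhit t ht hgt (Finset.mem_inter.2 ⟨ha.1, by simp⟩))
      · rintro rfl
        exact ha.2 (hDhit t ht hgt (Finset.mem_inter.2 ⟨ha.1, by simp⟩))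
      · rintro rfl
        exact hgt ha.1
    refine gameA (C \ ({e₁, e₂} ∪ (∅ ∪ {g}))).card {e₁, e₂} (∅ ∪ {g}) Pr
      ⟨?_, ?_, ?_, ?_, ?_, ?_⟩ le_rfl
    · intro a ha
      simp only [Finset.mem_insert, Finset.mem_singleton] at ha
      rcases ha with rfl | rfl <;> assumption
    · simp only [Finset.empty_union, Finset.singleton_subset_iff]
      exact hgC
    · simp only [Finset.empty_union, Finset.disjoint_singleton_right, Finset.mem_insert,
        Finset.mem_singleton]
      push_neg
      exact ⟨fun h => hg1 h, fun h => hg2 h⟩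
    · intro p hp
      obtain ⟨t, ht, hgt, rfl⟩ := hmemPr p hp
      constructor
      · rw [Finset.card_sdiff_of_subset (hDsub t ht hgt)]
        have h3 : t.card = 3 := tri_card_of_mem ht
        have h1 : (D t).card ≤ 1 := hDcard t ht hgt
        omega
      · intro a ha
        obtain ⟨haC, ha1, ha2, hag⟩ := hhit t ht hgt a ha
        simp only [Finset.mem_sdiff, Finset.mem_union, Finset.mem_insert,
          Finset.mem_singleton, Finset.notMem_empty, not_or, false_or]
        exact ⟨haC, ⟨ha1, ha2⟩, hag⟩
    · intro p hp q hq hpq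
      obtain ⟨t, ht, hgt, rfl⟩ := hmemPr p hp
      obtain ⟨t', ht', hgt', rfl⟩ := hmemPr q hq
      have htt' : t ≠ t' := fun h => hpq (by rw [h])
      rw [Finset.disjoint_left]
      intro a hat hat'
      rw [Finset.mem_sdiff] at hat hat'
      have haF : a ∉ ({e₁, e₂} : Finset (Sym2 V)) := by
        intro haF
        exact hat.2 (hDhit t ht hgt (Finset.mem_inter.2 ⟨hat.1, haF⟩))
      have := hDcov t ht t' ht' hgt hgt' htt' a (Finset.mem_inter.2 ⟨hat.1, hat'.1⟩) haF
      rw [Finset.mem_union] at this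
      tauto
    · intro x y z htri
      have htmem : triEdges x y z ∈ TriSets C := ⟨x, y, z, htri, rfl⟩
      by_cases hgt : g ∈ triEdges x y z
      · exact Or.inl ⟨g, by simp, hgt⟩
      · refine Or.inr ⟨triEdges x y z \ D (triEdges x y z), ?_, Finset.sdiff_subset⟩
        rw [hPr, Finset.mem_image]
        refine ⟨triEdges x y z, ?_, rfl⟩
        rw [Finset.mem_filter, Finset.mem_powerset]
        exact ⟨tri_subset htmem, htmem, hgt⟩

end DtoPi
section Conn

variable {V : Type*} [DecidableEq V]

open Classical

/-- Alive triangles: triangles of `C` avoiding all edges in `G`. -/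
def AliveT (C G : Finset (Sym2 V)) (t : Finset (Sym2 V)) : Prop :=
  t ∈ TriSets C ∧ ∀ e ∈ G, e ∉ t

/-- A hit triangle: an alive triangle containing an edge of `F`. -/
def HitT (C F G : Finset (Sym2 V)) (t : Finset (Sym2 V)) : Prop :=
  AliveT C G t ∧ (t ∩ F).Nonempty

/-- Adjacency of alive triangles through a shared non-`F` edge. -/
def AdjT (C F G : Finset (Sym2 V)) (t u : Finset (Sym2 V)) : Prop :=
  AliveT C G t ∧ AliveT C G u ∧ t ≠ u ∧ ∃ s, s ∈ t ∧ s ∈ u ∧ s ∉ F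

/-- Connectivity of alive triangles. -/
def ConnT (C F G : Finset (Sym2 V)) : Finset (Sym2 V) → Finset (Sym2 V) → Prop :=
  Relation.ReflTransGen (AdjT C F G)

lemma adjT_symm {C F G : Finset (Sym2 V)} {t u : Finset (Sym2 V)}
    (h : AdjT C F G t u) : AdjT C F G u t := by
  obtain ⟨h1, h2, h3, s, hs1, hs2, hs3⟩ := h
  exact ⟨h2, h1, h3.symm, s, hs2, hs1, hs3⟩

lemma connT_symm {C F G : Finset (Sym2 V)} {t u : Finset (Sym2 V)}
    (h : ConnT C F G t u) : ConnT C F G u t := by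
  induction h with
  | refl => exact Relation.ReflTransGen.refl
  | tail hab hbc ih => exact Relation.ReflTransGen.head (adjT_symm hbc) ih

lemma aliveT_anti {C G : Finset (Sym2 V)} {t : Finset (Sym2 V)}
    (h : AliveT C G t) : AliveT C ∅ t := ⟨h.1, by simp⟩

lemma adjT_anti {C F G : Finset (Sym2 V)} {t u : Finset (Sym2 V)}
    (h : AdjT C F G t u) : AdjT C F ∅ t u :=
  ⟨aliveT_anti h.1, aliveT_anti h.2.1, h.2.2.1, h.2.2.2⟩

lemma connT_anti {C F G : Finset (Sym2 V)} {t u : Finset (Sym2 V)}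
    (h : ConnT C F G t u) : ConnT C F ∅ t u :=
  Relation.ReflTransGen.mono (fun _ _ => adjT_anti) _ _ h

variable {C F : Finset (Sym2 V)} {pos : Finset (Sym2 V) → ℕ}

/-- Position structure: injective on triangles, intersecting triangles consecutive. -/
def PosOK (C : Finset (Sym2 V)) (pos : Finset (Sym2 V) → ℕ) : Prop :=
  (∀ t ∈ TriSets C, ∀ t' ∈ TriSets C, pos t = pos t' → t = t') ∧
  (∀ t ∈ TriSets C, ∀ t' ∈ TriSets C, t ≠ t' → (t ∩ t').Nonempty →
    pos t + 1 = pos t' ∨ pos t' + 1 = pos t)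

lemma crossT (hpos : PosOK C pos) {a b : Finset (Sym2 V)} (hconn : ConnT C F ∅ a b) :
    ∀ p : ℕ, pos a ≤ p → p < pos b →
      ∃ w w', AdjT C F ∅ w w' ∧ pos w = p ∧ pos w' = p + 1 := by
  induction hconn using Relation.ReflTransGen.head_induction_on with
  | refl =>
    intro p h1 h2
    omega
  | @head a' c hadj htail ih =>
    intro p h1 h2
    obtain ⟨ha', hc, hne, s, hs1, hs2, hs3⟩ := hadj
    have hint : (a' ∩ c).Nonempty := ⟨s, Finset.mem_inter.2 ⟨hs1, hs2⟩⟩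
    rcases hpos.2 a' ha'.1 c hc.1 hne hint with hd | hd
    · by_cases hcp : pos c ≤ p
      · exact ih p hcp h2
      · have hpa : p = pos a' := by omega
        exact ⟨a', c, ⟨ha', hc, hne, s, hs1, hs2, hs3⟩, hpa.symm, by omega⟩
    · exact ih p (by omega) h2

lemma cutT (hpos : PosOK C pos) {u u' : Finset (Sym2 V)}
    (hu : u ∈ TriSets C) (hu' : u' ∈ TriSets C) (hne : u ≠ u')
    (hp : pos u + 1 = pos u') {e : Sym2 V} (heF : e ∈ F) (heu : e ∈ u) (heu' : e ∈ u')
    {a b : Finset (Sym2 V)} (hconn : ConnT C F ∅ a b)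
    (ha : pos a ≤ pos u) (hb : pos u < pos b) : False := by
  obtain ⟨w, w', hadj, hw, hw'⟩ := crossT hpos hconn (pos u) ha hb
  obtain ⟨hwA, hw'A, hwne, s, hs1, hs2, hs3⟩ := hadj
  have hwu : w = u := hpos.1 w hwA.1 u hu hw
  have hw'u' : w' = u' := hpos.1 w' hw'A.1 u' hu' (by omega)
  subst hwu; subst hw'u'
  have := tri_inter_subsingleton hu hu' hne s (Finset.mem_inter.2 ⟨hs1, hs2⟩)
    e (Finset.mem_inter.2 ⟨heu, heu'⟩)
  exact hs3 (this ▸ heF)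

lemma alphaT (hpos : PosOK C pos) {x y : Finset (Sym2 V)}
    (hx : x ∈ TriSets C) (hy : y ∈ TriSets C) (hxy : x ≠ y)
    {e : Sym2 V} (heF : e ∈ F) (hex : e ∈ x) (hey : e ∈ y)
    (hconn : ConnT C F ∅ x y) : False := by
  have hint : (x ∩ y).Nonempty := ⟨e, Finset.mem_inter.2 ⟨hex, hey⟩⟩
  rcases hpos.2 x hx y hy hxy hint with hd | hd
  · exact cutT hpos hx hy hxy hd heF hex hey hconn le_rfl (by omega)
  · exact cutT hpos hy hx hxy.symm hd heF hey hex (connT_symm hconn) le_rfl (by omega)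

end Conn
section BuildD

variable {V : Type*} [DecidableEq V]

open Classical

lemma buildD {C : Finset (Sym2 V)} {e₁ e₂ g : Sym2 V} {pos : Finset (Sym2 V) → ℕ}
    (he₁ : e₁ ∈ C) (he₂ : e₂ ∈ C) (hne : e₁ ≠ e₂)
    (hgC : g ∈ C) (hg1 : g ≠ e₁) (hg2 : g ≠ e₂)
    (hpos : PosOK C pos)
    (hNoConn : ∀ h h' : Finset (Sym2 V), HitT C {e₁, e₂} {g} h → HitT C {e₁, e₂} {g} h' →
      h ≠ h' → ¬ ConnT C {e₁, e₂} {g} h h')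
    (hNotBoth : ∀ t ∈ TriSets C, g ∉ t → ¬ ({e₁, e₂} : Finset (Sym2 V)) ⊆ t) :
    BreakerTurn C HasTriangle 1 {e₁, e₂} ∅ := by
  classical
  set F : Finset (Sym2 V) := {e₁, e₂} with hF
  set Lft : Finset (Sym2 V) → Prop :=
    fun t => ∃ h, HitT C F {g} h ∧ ConnT C F {g} h t ∧ pos h < pos t with hLft
  set D : Finset (Sym2 V) → Finset (Sym2 V) :=
    fun t => if (t ∩ F).Nonempty then t ∩ F
      else t.filter (fun s => ∃ u, AliveT C {g} u ∧ u ≠ t ∧ s ∈ u ∧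
        (if Lft t then pos u < pos t else pos t < pos u)) with hD
  have haliveg : ∀ t, AliveT C {g} t ↔ t ∈ TriSets C ∧ g ∉ t := by
    intro t
    constructor
    · exact fun h => ⟨h.1, h.2 g (Finset.mem_singleton_self g)⟩
    · rintro ⟨h1, h2⟩
      exact ⟨h1, fun e he => by rw [Finset.mem_singleton] at he; subst he; exact h2⟩
  -- the covering lemma, one orientation
  have covAux : ∀ t t', AliveT C {g} t → AliveT C {g} t' → t ≠ t' →
      pos t + 1 = pos t' → ∀ s ∈ t ∩ t', s ∉ F → s ∈ D t ∪ D t' := by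
    intro t t' hAt hAt' htt' hpp s hs hsF
    rw [Finset.mem_inter] at hs
    have hstep : AdjT C F {g} t t' := ⟨hAt, hAt', htt', s, hs.1, hs.2, hsF⟩
    by_cases hHt : (t ∩ F).Nonempty <;> by_cases hHt' : (t' ∩ F).Nonempty
    · exact absurd (Relation.ReflTransGen.single hstep)
        (hNoConn t t' ⟨hAt, hHt⟩ ⟨hAt', hHt'⟩ htt')
    · -- t hit, t' clean : s goes into D t'
      have hLt' : Lft t' := ⟨t, ⟨hAt, hHt⟩, Relation.ReflTransGen.single hstep, by omega⟩
      refine Finset.mem_union_right _ ?_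
      simp only [hD]
      simp only [if_neg hHt']
      rw [Finset.mem_filter]
      exact ⟨hs.2, t, hAt, htt', hs.1, by rw [if_pos hLt']; omega⟩
    · -- t clean, t' hit : s goes into D t
      have hnLt : ¬ Lft t := by
        rintro ⟨h, hh, hconn, hlt⟩
        have hconn' : ConnT C F {g} h t' := hconn.tail hstep
        have hht' : h ≠ t' := by
          intro heq
          rw [heq] at hlt
          omega
        exact hNoConn h t' hh ⟨hAt', hHt'⟩ hht' hconn'
      refine Finset.mem_union_left _ ?_
      simp only [hD]
      simp only [if_neg hHt]
      rw [Finset.mem_filter]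
      exact ⟨hs.1, t', hAt', htt'.symm, hs.2, by rw [if_neg hnLt]; omega⟩
    · -- both clean
      by_cases hLt' : Lft t'
      · refine Finset.mem_union_right _ ?_
        simp only [hD]
        simp only [if_neg hHt']
        rw [Finset.mem_filter]
        exact ⟨hs.2, t, hAt, htt', hs.1, by rw [if_pos hLt']; omega⟩
      · have hnLt : ¬ Lft t := by
          rintro ⟨h, hh, hconn, hlt⟩
          exact hLt' ⟨h, hh, hconn.tail hstep, by omega⟩
        refine Finset.mem_union_left _ ?_
        simp only [hD]
        simp only [if_neg hHt]
        rw [Finset.mem_filter]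
        exact ⟨hs.1, t', hAt', htt'.symm, hs.2, by rw [if_neg hnLt]; omega⟩
  refine DtoPi he₁ he₂ hne hgC hg1 hg2 D ?_ ?_ ?_ ?_
  · -- D t ⊆ t
    intro t ht hgt
    simp only [hD]
    by_cases hHt : (t ∩ F).Nonempty
    · rw [if_pos hHt]; exact Finset.inter_subset_left
    · rw [if_neg hHt]; exact Finset.filter_subset _ _
  · -- card of D t ≤ 1
    intro t ht hgt
    simp only [hD]
    by_cases hHt : (t ∩ F).Nonempty
    · rw [if_pos hHt]
      exact hit_card_le_one (pair_card_two hne) (hNotBoth t ht hgt)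
    · rw [if_neg hHt]
      rw [Finset.card_le_one]
      intro a ha b hb
      rw [Finset.mem_filter] at ha hb
      obtain ⟨hat, u, hAu, hut, hau, hside⟩ := ha
      obtain ⟨hbt, u', hAu', hu't, hbu', hside'⟩ := hb
      have hadj1 := hpos.2 t ht u hAu.1 (Ne.symm hut) ⟨a, Finset.mem_inter.2 ⟨hat, hau⟩⟩
      have hadj2 := hpos.2 t ht u' hAu'.1 (Ne.symm hu't) ⟨b, Finset.mem_inter.2 ⟨hbt, hbu'⟩⟩
      have huu' : u = u' := by
        refine hpos.1 u hAu.1 u' hAu'.1 ?_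
        by_cases hLt : Lft t
        · rw [if_pos hLt] at hside hside'
          omega
        · rw [if_neg hLt] at hside hside'
          omega
      subst huu'
      exact tri_inter_subsingleton ht hAu.1 (Ne.symm hut)
        a (Finset.mem_inter.2 ⟨hat, hau⟩) b (Finset.mem_inter.2 ⟨hbt, hbu'⟩)
  · -- t ∩ F ⊆ D t
    intro t ht hgt
    simp only [hD]
    by_cases hHt : (t ∩ F).Nonempty
    · rw [if_pos hHt]
    · rw [if_neg hHt]
      rw [Finset.not_nonempty_iff_eq_empty] at hHt
      rw [hHt]
      exact Finset.empty_subset _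
  · -- covering
    intro t ht t' ht' hgt hgt' htt' s hs hsF
    have hAt : AliveT C {g} t := (haliveg t).2 ⟨ht, hgt⟩
    have hAt' : AliveT C {g} t' := (haliveg t').2 ⟨ht', hgt'⟩
    rw [Finset.mem_inter] at hs
    have hint : (t ∩ t').Nonempty := ⟨s, Finset.mem_inter.2 ⟨hs.1, hs.2⟩⟩
    rcases hpos.2 t ht t' ht' htt' hint with hd | hd
    · exact covAux t t' hAt hAt' htt' hd s (Finset.mem_inter.2 ⟨hs.1, hs.2⟩) hsF
    · have := covAux t' t hAt' hAt htt'.symm hd s (Finset.mem_inter.2 ⟨hs.2, hs.1⟩) hsF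
      rw [Finset.mem_union] at this ⊢
      tauto

end BuildD
section PathCase

variable {V : Type*} [DecidableEq V]

open Classical

lemma tri_sdiff_pair_nonempty {C : Finset (Sym2 V)} {t : Finset (Sym2 V)}
    (ht : t ∈ TriSets C) (F : Finset (Sym2 V)) (hF : F.card ≤ 2) : (t \ F).Nonempty := by
  rw [← Finset.card_pos]
  have h1 : t \ F = t \ (t ∩ F) := by rw [Finset.sdiff_inter_self_left]
  rw [h1, Finset.card_sdiff_of_subset Finset.inter_subset_left, tri_card_of_mem ht]
  have h2 : (t ∩ F).card ≤ F.card := Finset.card_le_card Finset.inter_subset_right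
  omega

lemma pathMain {C : Finset (Sym2 V)} {e₁ e₂ : Sym2 V} {pos : Finset (Sym2 V) → ℕ}
    (he₁ : e₁ ∈ C) (he₂ : e₂ ∈ C) (hne : e₁ ≠ e₂) (hpos : PosOK C pos)
    (h1 : ¬ ∃ t ∈ TriSets C, ({e₁, e₂} : Finset (Sym2 V)) ⊆ t)
    (x y : Finset (Sym2 V)) (hx : x ∈ TriSets C) (hy : y ∈ TriSets C) (hxy : x ≠ y)
    (hex : e₁ ∈ x) (hhy : (y ∩ ({e₁, e₂} : Finset (Sym2 V))).Nonempty)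
    (hconn : ConnT C ({e₁, e₂} : Finset (Sym2 V)) ∅ x y) :
    BreakerTurn C HasTriangle 1 {e₁, e₂} ∅ := by
  classical
  set F : Finset (Sym2 V) := {e₁, e₂} with hF
  have hFcard : F.card = 2 := pair_card_two hne
  have hnotboth : ∀ t ∈ TriSets C, ¬ F ⊆ t := by
    intro t ht hsub
    exact h1 ⟨t, ht, hsub⟩
  -- y contains e₂
  have hey : e₂ ∈ y := by
    obtain ⟨ey, heyy⟩ := hhy
    rw [Finset.mem_inter] at heyy
    rcases Finset.mem_insert.1 heyy.2 with rfl | h'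
    · exact absurd hconn (by
        intro hc
        exact alphaT hpos hx hy hxy (Finset.mem_insert_self ey _) hex heyy.1 hc)
    · rw [Finset.mem_singleton] at h'
      subst h'
      exact heyy.1
  have he2x : e₂ ∉ x := by
    intro hc
    exact hnotboth x hx (Finset.insert_subset hex (by simpa using hc))
  have he1y : e₁ ∉ y := by
    intro hc
    exact hnotboth y hy (Finset.insert_subset hc (by simpa using hey))
  -- pick g inside x, away from e₁, e₂
  obtain ⟨g, hg⟩ := tri_sdiff_pair_nonempty hx F (by omega)
  rw [Finset.mem_sdiff] at hg
  have hgx : g ∈ x := hg.1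
  have hgF : g ∉ F := hg.2
  have hg1 : g ≠ e₁ := fun h => hgF (by rw [h]; exact Finset.mem_insert_self _ _)
  have hg2 : g ≠ e₂ := fun h => hgF (by rw [h]; simp [hF])
  have hgC : g ∈ C := tri_edges_mem hx g hgx
  refine buildD he₁ he₂ hne hgC hg1 hg2 hpos ?_ (fun t ht _ => hnotboth t ht)
  intro h h' hh hh' hne' hconn'
  have hconn0' : ConnT C F ∅ h h' := connT_anti hconn'
  obtain ⟨⟨hhT, hhg⟩, eh, heh⟩ := hh
  obtain ⟨⟨hh'T, hh'g⟩, eh', heh'⟩ := hh'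
  rw [Finset.mem_inter] at heh heh'
  have hhgx : g ∉ h := hhg g (Finset.mem_singleton_self g)
  have hh'gx : g ∉ h' := hh'g g (Finset.mem_singleton_self g)
  -- main two-sided argument
  have main2 : ∀ a b : Finset (Sym2 V), a ∈ TriSets C → b ∈ TriSets C → g ∉ a → g ∉ b →
      a ≠ b → e₁ ∈ a → e₂ ∈ b → ConnT C F ∅ a b → False := by
    intro a b haT hbT hga hgb hab he1a he2b hcab
    have hax : a ≠ x := fun hc => hga (hc ▸ hgx)
    have he1F : e₁ ∈ F := Finset.mem_insert_self _ _
    have he2F : e₂ ∈ F := by simp [hF]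
    have hbx : b ≠ x := fun hc => he2x (hc ▸ he2b)
    have hyx : y ≠ x := fun hc => he1y (hc ▸ hex)
    rcases hpos.2 a haT x hx hax ⟨e₁, Finset.mem_inter.2 ⟨he1a, hex⟩⟩ with hA | hB
    · -- pos a + 1 = pos x
      have hba : pos b ≤ pos a := by
        by_contra hc
        push_neg at hc
        exact cutT hpos haT hx hax hA he1F he1a hex hcab le_rfl hc
      have hbnea : pos b ≠ pos a := fun hc => hab.symm (hpos.1 b hbT a haT hc)
      have hya : pos a < pos y := by
        by_contra hc
        push_neg at hc
        exact cutT hpos haT hx hax hA he1F he1a hex (connT_symm hconn) hc (by omega)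
      have hynex : pos y ≠ pos x := fun hc => hyx (hpos.1 y hy x hx hc)
      have hby : b ≠ y := by
        intro hc
        subst hc
        omega
      rcases hpos.2 b hbT y hy hby ⟨e₂, Finset.mem_inter.2 ⟨he2b, hey⟩⟩ with hd | hd <;> omega
    · -- pos x + 1 = pos a
      have hba : pos x < pos b := by
        by_contra hc
        push_neg at hc
        exact cutT hpos hx haT (Ne.symm hax) hB he1F hex he1a (connT_symm hcab) hc (by omega)
      have hbnea : pos b ≠ pos a := fun hc => hab.symm (hpos.1 b hbT a haT hc)
      have hya : pos y ≤ pos x := by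
        by_contra hc
        push_neg at hc
        exact cutT hpos hx haT (Ne.symm hax) hB he1F hex he1a hconn le_rfl hc
      have hynex : pos y ≠ pos x := fun hc => hyx (hpos.1 y hy x hx hc)
      have hby : b ≠ y := by
        intro hc
        subst hc
        omega
      rcases hpos.2 b hbT y hy hby ⟨e₂, Finset.mem_inter.2 ⟨he2b, hey⟩⟩ with hd | hd <;> omega
  rcases Finset.mem_insert.1 heh.2 with hh1 | hh2 <;>
    rcases Finset.mem_insert.1 heh'.2 with hh'1 | hh'2
  · exact alphaT hpos hhT hh'T hne' (show e₁ ∈ F by simp [hF])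
      (by rw [← hh1]; exact heh.1) (by rw [← hh'1]; exact heh'.1) hconn0'
  · rw [Finset.mem_singleton] at hh'2
    exact main2 h h' hhT hh'T hhgx hh'gx hne' (by rw [← hh1]; exact heh.1)
      (by rw [← hh'2]; exact heh'.1) hconn0'
  · rw [Finset.mem_singleton] at hh2
    exact main2 h' h hh'T hhT hh'gx hhgx hne'.symm (by rw [← hh'1]; exact heh'.1)
      (by rw [← hh2]; exact heh.1) (connT_symm hconn0')
  · rw [Finset.mem_singleton] at hh2 hh'2
    exact alphaT hpos hhT hh'T hne' (show e₂ ∈ F by simp [hF])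
      (by rw [← hh2]; exact heh.1) (by rw [← hh'2]; exact heh'.1) hconn0'

lemma pathCase {C : Finset (Sym2 V)} {e₁ e₂ : Sym2 V} {pos : Finset (Sym2 V) → ℕ}
    (he₁ : e₁ ∈ C) (he₂ : e₂ ∈ C) (hne : e₁ ≠ e₂) (hpos : PosOK C pos)
    (hfree : (C \ {e₁, e₂}).Nonempty) :
    BreakerTurn C HasTriangle 1 {e₁, e₂} ∅ := by
  classical
  set F : Finset (Sym2 V) := {e₁, e₂} with hF
  have hFcard : F.card = 2 := pair_card_two hne
  by_cases h1 : ∃ t ∈ TriSets C, F ⊆ t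
  · -- case (i): a triangle containing both of Maker's edges
    obtain ⟨tS, htS, hFtS⟩ := h1
    have he1t : e₁ ∈ tS := hFtS (Finset.mem_insert_self _ _)
    have he2t : e₂ ∈ tS := hFtS (by simp [hF])
    obtain ⟨g, hg⟩ := tri_sdiff_pair_nonempty htS F (by omega)
    rw [Finset.mem_sdiff] at hg
    have hgt : g ∈ tS := hg.1
    have hgF : g ∉ F := hg.2
    have hg1 : g ≠ e₁ := fun h => hgF (by rw [h]; exact Finset.mem_insert_self _ _)
    have hg2 : g ≠ e₂ := fun h => hgF (by rw [h]; simp [hF])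
    have hgC : g ∈ C := tri_edges_mem htS g hgt
    have hnotboth : ∀ t ∈ TriSets C, g ∉ t → ¬ F ⊆ t := by
      intro t ht hgnt hsub
      have : t = tS := tri_eq_of_two_shared ht htS hne
        (hsub (Finset.mem_insert_self _ _)) he1t (hsub (by simp [hF])) he2t
      exact hgnt (this ▸ hgt)
    refine buildD he₁ he₂ hne hgC hg1 hg2 hpos ?_ hnotboth
    intro h h' hh hh' hne' hconn'
    have hconn0' : ConnT C F ∅ h h' := connT_anti hconn'
    obtain ⟨⟨hhT, hhg⟩, eh, heh⟩ := hh
    obtain ⟨⟨hh'T, hh'g⟩, eh', heh'⟩ := hh'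
    rw [Finset.mem_inter] at heh heh'
    have hhgx : g ∉ h := hhg g (Finset.mem_singleton_self g)
    have hh'gx : g ∉ h' := hh'g g (Finset.mem_singleton_self g)
    have main1 : ∀ a b : Finset (Sym2 V), a ∈ TriSets C → b ∈ TriSets C → g ∉ a → g ∉ b →
        a ≠ b → e₁ ∈ a → e₂ ∈ b → ConnT C F ∅ a b → False := by
      intro a b haT hbT hga hgb hab he1a he2b hcab
      have hat : a ≠ tS := fun hc => hga (hc ▸ hgt)
      have hbt : b ≠ tS := fun hc => hgb (hc ▸ hgt)
      have he1F : e₁ ∈ F := Finset.mem_insert_self _ _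
      have he2F : e₂ ∈ F := by simp [hF]
      have habp : pos a ≠ pos b := fun hc => hab (hpos.1 a haT b hbT hc)
      rcases hpos.2 a haT tS htS hat ⟨e₁, Finset.mem_inter.2 ⟨he1a, he1t⟩⟩ with hA | hA <;>
        rcases hpos.2 b hbT tS htS hbt ⟨e₂, Finset.mem_inter.2 ⟨he2b, he2t⟩⟩ with hB | hB
      · omega
      · -- pos a + 1 = pos tS, pos tS + 1 = pos b
        exact cutT hpos haT htS hat hA he1F he1a he1t hcab le_rfl (by omega)
      · -- pos tS + 1 = pos a, pos b + 1 = pos tS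
        exact cutT hpos hbT htS hbt hB he2F he2b he2t (connT_symm hcab) le_rfl (by omega)
      · omega
    rcases Finset.mem_insert.1 heh.2 with hh1 | hh2 <;>
      rcases Finset.mem_insert.1 heh'.2 with hh'1 | hh'2
    · exact alphaT hpos hhT hh'T hne' (show e₁ ∈ F by simp [hF])
        (by rw [← hh1]; exact heh.1) (by rw [← hh'1]; exact heh'.1) hconn0'
    · rw [Finset.mem_singleton] at hh'2
      exact main1 h h' hhT hh'T hhgx hh'gx hne' (by rw [← hh1]; exact heh.1)
        (by rw [← hh'2]; exact heh'.1) hconn0'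
    · rw [Finset.mem_singleton] at hh2
      exact main1 h' h hh'T hhT hh'gx hhgx hne'.symm (by rw [← hh'1]; exact heh'.1)
        (by rw [← hh2]; exact heh.1) (connT_symm hconn0')
    · rw [Finset.mem_singleton] at hh2 hh'2
      exact alphaT hpos hhT hh'T hne' (show e₂ ∈ F by simp [hF])
        (by rw [← hh2]; exact heh.1) (by rw [← hh'2]; exact heh'.1) hconn0'
  · by_cases h2 : ∃ x y : Finset (Sym2 V), x ∈ TriSets C ∧ y ∈ TriSets C ∧
        (x ∩ F).Nonempty ∧ (y ∩ F).Nonempty ∧ x ≠ y ∧ ConnT C F ∅ x y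
    · obtain ⟨x, y, hx, hy, hhx, hhy, hxy, hconn⟩ := h2
      obtain ⟨ex, hexx⟩ := hhx
      rw [Finset.mem_inter] at hexx
      rcases Finset.mem_insert.1 hexx.2 with hex1 | hex2
      · exact pathMain he₁ he₂ hne hpos h1 x y hx hy hxy (by rw [← hex1]; exact hexx.1) hhy hconn
      · rw [Finset.mem_singleton] at hex2
        have hex' : e₂ ∈ x := by rw [← hex2]; exact hexx.1
        have hcomm : ({e₂, e₁} : Finset (Sym2 V)) = F := Finset.pair_comm e₂ e₁
        have h1' : ¬ ∃ t ∈ TriSets C, ({e₂, e₁} : Finset (Sym2 V)) ⊆ t := by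
          rw [hcomm]; exact h1
        have hhy' : (y ∩ ({e₂, e₁} : Finset (Sym2 V))).Nonempty := by rw [hcomm]; exact hhy
        have hconn' : ConnT C ({e₂, e₁} : Finset (Sym2 V)) ∅ x y := by rw [hcomm]; exact hconn
        have := pathMain he₂ he₁ hne.symm hpos h1' x y hx hy hxy
          hex' hhy' hconn'
        rwa [hcomm] at this
    · obtain ⟨g, hgfree⟩ := hfree
      rw [Finset.mem_sdiff] at hgfree
      have hgC : g ∈ C := hgfree.1
      have hg1 : g ≠ e₁ := fun h => hgfree.2 (by rw [h]; exact Finset.mem_insert_self _ _)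
      have hg2 : g ≠ e₂ := fun h => hgfree.2 (by rw [h]; simp [hF])
      refine buildD he₁ he₂ hne hgC hg1 hg2 hpos ?_ ?_
      · intro h h' hh hh' hne' hconn'
        exact h2 ⟨h, h', hh.1.1, hh'.1.1, hh.2, hh'.2, hne', connT_anti hconn'⟩
      · intro t ht _ hsub
        exact h1 ⟨t, ht, hsub⟩

end PathCase
section Glue

variable {V : Type*} [DecidableEq V]

open Classical

lemma degenerateCase {C : Finset (Sym2 V)} {e₁ e₂ : Sym2 V}
    (he₁ : e₁ ∈ C) (he₂ : e₂ ∈ C) (hne : e₁ ≠ e₂)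
    (hempty : C \ ({e₁, e₂} : Finset (Sym2 V)) = ∅) :
    BreakerTurn C HasTriangle 1 {e₁, e₂} ∅ := by
  classical
  have hsub : C ⊆ ({e₁, e₂} : Finset (Sym2 V)) := by
    intro a ha
    by_contra hc
    have : a ∈ C \ ({e₁, e₂} : Finset (Sym2 V)) := Finset.mem_sdiff.2 ⟨ha, hc⟩
    rw [hempty] at this
    exact absurd this (Finset.notMem_empty a)
  have hnotri : ∀ x y z : V, ¬ IsTriangleIn C x y z := by
    rintro x y z ⟨hxy, hyz, hxz, h1, h2, h3⟩
    have hsubt : triEdges x y z ⊆ ({e₁, e₂} : Finset (Sym2 V)) := by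
      intro e he
      rcases mem_triEdges_iff.1 he with rfl | rfl | rfl <;> exact hsub (by assumption)
    have := Finset.card_le_card hsubt
    rw [triEdges_card hxy hyz hxz, pair_card_two hne] at this
    omega
  refine ⟨not_hasTriangle_pair, ∅, by simp, ?_, ?_⟩
  · rw [Finset.union_empty, hempty]
    simp
  · refine gameA (C \ ({e₁, e₂} ∪ (∅ ∪ ∅))).card {e₁, e₂} (∅ ∪ ∅) ∅ ⟨?_, ?_, ?_, ?_, ?_, ?_⟩ le_rfl
    · intro a ha
      simp only [Finset.mem_insert, Finset.mem_singleton] at ha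
      rcases ha with rfl | rfl <;> assumption
    · simp
    · simp
    · simp
    · simp
    · intro x y z htri
      exact absurd htri (hnotri x y z)

lemma pathGlue {C : Finset (Sym2 V)} {e₁ e₂ : Sym2 V} {m : ℕ}
    (φ : TriSets C → Fin m) (hφinj : Function.Injective φ)
    (hφadj : ∀ t t' : TriSets C, t ≠ t' →
      ((t : Finset (Sym2 V)) ∩ (t' : Finset (Sym2 V))).Nonempty → pathAdj (φ t) (φ t'))
    (he₁ : e₁ ∈ C) (he₂ : e₂ ∈ C) (hne : e₁ ≠ e₂)
    (hfree : (C \ {e₁, e₂}).Nonempty) :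
    BreakerTurn C HasTriangle 1 {e₁, e₂} ∅ := by
  classical
  set pos : Finset (Sym2 V) → ℕ :=
    fun t => if h : t ∈ TriSets C then (φ ⟨t, h⟩).val else 0 with hposdef
  have hpos : PosOK C pos := by
    constructor
    · intro t ht t' ht' heq
      rw [hposdef] at heq
      simp only [dif_pos ht, dif_pos ht'] at heq
      have : φ ⟨t, ht⟩ = φ ⟨t', ht'⟩ := Fin.val_injective heq
      have := hφinj this
      exact congrArg Subtype.val this
    · intro t ht t' ht' hne' hint
      have hsne : (⟨t, ht⟩ : TriSets C) ≠ ⟨t', ht'⟩ := by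
        intro hc
        exact hne' (congrArg Subtype.val hc)
      have := hφadj ⟨t, ht⟩ ⟨t', ht'⟩ hsne hint
      rw [pathAdj] at this
      rw [hposdef]
      simp only [dif_pos ht, dif_pos ht']
      exact this
  exact pathCase he₁ he₂ hne hpos hfree

end Glue
section BookCase

variable {V : Type*} [DecidableEq V]

open Classical

lemma bookScaffold {C : Finset (Sym2 V)} {e₁ e₂ : Sym2 V} {T0 T1 T2 : Finset (Sym2 V)}
    {c g : Sym2 V}
    (he₁ : e₁ ∈ C) (he₂ : e₂ ∈ C) (hne : e₁ ≠ e₂)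
    (hT0 : T0 ∈ TriSets C) (hT1 : T1 ∈ TriSets C) (hT2 : T2 ∈ TriSets C)
    (hc0 : c ∈ T0) (hc1 : c ∈ T1) (hc2 : c ∈ T2)
    (hextra : ∀ t ∈ TriSets C, ¬(t = T0 ∨ t = T1 ∨ t = T2) → t ∩ T0 = ∅ ∧ t ∩ T1 = ∅)
    (hextra2 : ∀ t ∈ TriSets C, ∀ t' ∈ TriSets C, ¬(t = T0 ∨ t = T1 ∨ t = T2) →
      ¬(t' = T0 ∨ t' = T1 ∨ t' = T2) → t ≠ t' → t ∩ t' = ∅)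
    (hgC : g ∈ C) (hg1 : g ≠ e₁) (hg2 : g ≠ e₂)
    (hnb : ∀ t ∈ TriSets C, g ∉ t → ¬ ({e₁, e₂} : Finset (Sym2 V)) ⊆ t)
    (hsafeT : c ∉ ({e₁, e₂} : Finset (Sym2 V)) → ∀ t t' : Finset (Sym2 V),
      t ∈ TriSets C → t' ∈ TriSets C →
      (t = T0 ∨ t = T1 ∨ t = T2) → (t' = T0 ∨ t' = T1 ∨ t' = T2) → t ≠ t' →
      g ∉ t → g ∉ t' →
      ¬((t ∩ ({e₁, e₂} : Finset (Sym2 V))).Nonempty ∧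
        (t' ∩ ({e₁, e₂} : Finset (Sym2 V))).Nonempty))
    (hsafeL : ∀ L ∈ TriSets C, ¬(L = T0 ∨ L = T1 ∨ L = T2) → g ∉ L → g ∉ T2 →
      (L ∩ ({e₁, e₂} : Finset (Sym2 V))).Nonempty →
      (L ∩ T2) \ ({e₁, e₂} : Finset (Sym2 V)) = ∅) :
    BreakerTurn C HasTriangle 1 {e₁, e₂} ∅ := by
  classical
  set F : Finset (Sym2 V) := {e₁, e₂} with hF
  set D : Finset (Sym2 V) → Finset (Sym2 V) :=
    fun t => if (t ∩ F).Nonempty then t ∩ F else if t = T2 then {c} else t ∩ T2 with hD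
  refine DtoPi he₁ he₂ hne hgC hg1 hg2 D ?_ ?_ ?_ ?_
  · -- D t ⊆ t
    intro t ht hgt
    simp only [hD]
    by_cases hHt : (t ∩ F).Nonempty
    · rw [if_pos hHt]; exact Finset.inter_subset_left
    · rw [if_neg hHt]
      by_cases ht2 : t = T2
      · rw [if_pos ht2, ht2]
        simpa using hc2
      · rw [if_neg ht2]; exact Finset.inter_subset_left
  · -- card
    intro t ht hgt
    simp only [hD]
    by_cases hHt : (t ∩ F).Nonempty
    · rw [if_pos hHt]
      exact hit_card_le_one (pair_card_two hne) (hnb t ht hgt)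
    · rw [if_neg hHt]
      by_cases ht2 : t = T2
      · rw [if_pos ht2]; simp
      · rw [if_neg ht2]
        exact tri_inter_card_le_one ht hT2 ht2
  · -- t ∩ F ⊆ D t
    intro t ht hgt
    simp only [hD]
    by_cases hHt : (t ∩ F).Nonempty
    · rw [if_pos hHt]
    · rw [if_neg hHt]
      rw [Finset.not_nonempty_iff_eq_empty] at hHt
      rw [hHt]
      exact Finset.empty_subset _
  · -- coverage
    intro t ht t' ht' hgt hgt' htt' s hs hsF
    rw [Finset.mem_inter] at hs
    by_cases hTt : t = T0 ∨ t = T1 ∨ t = T2 <;> by_cases hTt' : t' = T0 ∨ t' = T1 ∨ t' = T2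
    · -- both in the triple: shared edge is c
      have hct : c ∈ t := by rcases hTt with h | h | h <;> rw [h] <;> assumption
      have hct' : c ∈ t' := by rcases hTt' with h | h | h <;> rw [h] <;> assumption
      have hsc : s = c := tri_inter_subsingleton ht ht' htt'
        s (Finset.mem_inter.2 ⟨hs.1, hs.2⟩) c (Finset.mem_inter.2 ⟨hct, hct'⟩)
      have hcF : c ∉ F := by rw [← hsc]; exact hsF
      have hnotbothhit := hsafeT hcF t t' ht ht' hTt hTt' htt' hgt hgt'
      by_cases hHt : (t ∩ F).Nonempty
      · -- t hit, so t' is clean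
        have hHt' : ¬ (t' ∩ F).Nonempty := fun hc => hnotbothhit ⟨hHt, hc⟩
        refine Finset.mem_union_right _ ?_
        simp only [hD, if_neg hHt']
        by_cases ht2' : t' = T2
        · rw [if_pos ht2']; simp [hsc]
        · rw [if_neg ht2']
          rw [hsc]
          exact Finset.mem_inter.2 ⟨hct', hc2⟩
      · refine Finset.mem_union_left _ ?_
        simp only [hD, if_neg hHt]
        by_cases ht2 : t = T2
        · rw [if_pos ht2]; simp [hsc]
        · rw [if_neg ht2]
          rw [hsc]
          exact Finset.mem_inter.2 ⟨hct, hc2⟩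
    · -- t in triple, t' extra: t must be T2 and t' clean
      have hext := hextra t' ht' hTt'
      have ht2 : t = T2 := by
        rcases hTt with h | h | h
        · exact absurd (Finset.mem_inter.2 ⟨hs.2, by rw [← h]; exact hs.1⟩ : s ∈ t' ∩ T0)
            (by rw [hext.1]; exact Finset.notMem_empty s)
        · exact absurd (Finset.mem_inter.2 ⟨hs.2, by rw [← h]; exact hs.1⟩ : s ∈ t' ∩ T1)
            (by rw [hext.2]; exact Finset.notMem_empty s)
        · exact h
      have hHt' : ¬ (t' ∩ F).Nonempty := by
        intro hc
        have hLres := hsafeL t' ht' hTt' hgt' (by rw [← ht2]; exact hgt) hc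
        have hmem : s ∈ (t' ∩ T2) \ F :=
          Finset.mem_sdiff.2 ⟨Finset.mem_inter.2 ⟨hs.2, by rw [← ht2]; exact hs.1⟩, hsF⟩
        rw [hLres] at hmem
        exact Finset.notMem_empty s hmem
      refine Finset.mem_union_right _ ?_
      simp only [hD, if_neg hHt']
      have ht'2 : t' ≠ T2 := fun hc => htt' (ht2.trans hc.symm)
      rw [if_neg ht'2]
      exact Finset.mem_inter.2 ⟨hs.2, by rw [← ht2]; exact hs.1⟩
    · -- t extra, t' in triple
      have hext := hextra t ht hTt
      have ht2 : t' = T2 := by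
        rcases hTt' with h | h | h
        · exact absurd (Finset.mem_inter.2 ⟨hs.1, by rw [← h]; exact hs.2⟩ : s ∈ t ∩ T0)
            (by rw [hext.1]; exact Finset.notMem_empty s)
        · exact absurd (Finset.mem_inter.2 ⟨hs.1, by rw [← h]; exact hs.2⟩ : s ∈ t ∩ T1)
            (by rw [hext.2]; exact Finset.notMem_empty s)
        · exact h
      have hHt : ¬ (t ∩ F).Nonempty := by
        intro hc
        have hLres := hsafeL t ht hTt hgt (by rw [← ht2]; exact hgt') hc
        have hmem : s ∈ (t ∩ T2) \ F :=
          Finset.mem_sdiff.2 ⟨Finset.mem_inter.2 ⟨hs.1, by rw [← ht2]; exact hs.2⟩, hsF⟩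
        rw [hLres] at hmem
        exact Finset.notMem_empty s hmem
      refine Finset.mem_union_left _ ?_
      simp only [hD, if_neg hHt]
      have htn2 : t ≠ T2 := fun hc => htt' (hc.trans ht2.symm)
      rw [if_neg htn2]
      exact Finset.mem_inter.2 ⟨hs.1, by rw [← ht2]; exact hs.2⟩
    · -- both extra
      have hdisj := hextra2 t ht t' ht' hTt hTt' htt'
      exact absurd (Finset.mem_inter.2 ⟨hs.1, hs.2⟩ : s ∈ t ∩ t')
        (by rw [hdisj]; exact Finset.notMem_empty s)

end BookCase
section BookCase2

variable {V : Type*} [DecidableEq V]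

open Classical

lemma bookCase {C : Finset (Sym2 V)} {e₁ e₂ : Sym2 V} {T0 T1 T2 : Finset (Sym2 V)}
    {c : Sym2 V}
    (he₁ : e₁ ∈ C) (he₂ : e₂ ∈ C) (hne : e₁ ≠ e₂)
    (hT0 : T0 ∈ TriSets C) (hT1 : T1 ∈ TriSets C) (hT2 : T2 ∈ TriSets C)
    (hc0 : c ∈ T0) (hc1 : c ∈ T1) (hc2 : c ∈ T2)
    (hextra : ∀ t ∈ TriSets C, ¬(t = T0 ∨ t = T1 ∨ t = T2) → t ∩ T0 = ∅ ∧ t ∩ T1 = ∅)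
    (hextra2 : ∀ t ∈ TriSets C, ∀ t' ∈ TriSets C, ¬(t = T0 ∨ t = T1 ∨ t = T2) →
      ¬(t' = T0 ∨ t' = T1 ∨ t' = T2) → t ≠ t' → t ∩ t' = ∅)
    (hfree : (C \ {e₁, e₂}).Nonempty) :
    BreakerTurn C HasTriangle 1 {e₁, e₂} ∅ := by
  classical
  set F : Finset (Sym2 V) := {e₁, e₂} with hF
  have hFcard : F.card = 2 := pair_card_two hne
  have he1F : e₁ ∈ F := Finset.mem_insert_self _ _
  have he2F : e₂ ∈ F := by simp [hF]
  by_cases h1 : ∃ t ∈ TriSets C, F ⊆ t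
  · obtain ⟨tS, htS, hFtS⟩ := h1
    have he1t : e₁ ∈ tS := hFtS he1F
    have he2t : e₂ ∈ tS := hFtS he2F
    obtain ⟨g, hg⟩ := tri_sdiff_pair_nonempty htS F (by omega)
    rw [Finset.mem_sdiff] at hg
    have hgtS : g ∈ tS := hg.1
    have hgF : g ∉ F := hg.2
    have hg1 : g ≠ e₁ := fun h => hgF (by rw [h]; exact he1F)
    have hg2 : g ≠ e₂ := fun h => hgF (by rw [h]; exact he2F)
    have hgC : g ∈ C := tri_edges_mem htS g hgtS
    refine bookScaffold he₁ he₂ hne hT0 hT1 hT2 hc0 hc1 hc2 hextra hextra2 hgC hg1 hg2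
      ?_ ?_ ?_
    · intro t ht hgt hsub
      have : t = tS := tri_eq_of_two_shared ht htS hne
        (hsub he1F) he1t (hsub he2F) he2t
      exact hgt (by rw [this]; exact hgtS)
    · intro hcF t t' ht ht' hTt hTt' htt' hgt hgt' ⟨⟨e, he⟩, ⟨e', he'⟩⟩
      have haux : ∀ u ∈ TriSets C, (u = T0 ∨ u = T1 ∨ u = T2) → g ∉ u →
          ∀ ee, ee ∈ u ∩ F → u = T2 := by
        intro u hu hTu hgu ee hee
        rw [Finset.mem_inter] at hee
        have heeS : ee ∈ tS := hFtS hee.2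
        have hut : u ≠ tS := fun hc => hgu (by rw [hc]; exact hgtS)
        by_cases hTs : tS = T0 ∨ tS = T1 ∨ tS = T2
        · have hctS : c ∈ tS := by rcases hTs with h | h | h <;> rw [h] <;> assumption
          have hcu : c ∈ u := by rcases hTu with h | h | h <;> rw [h] <;> assumption
          have hec : ee = c := tri_inter_subsingleton hu htS hut
            ee (Finset.mem_inter.2 ⟨hee.1, heeS⟩) c (Finset.mem_inter.2 ⟨hcu, hctS⟩)
          exact absurd (show c ∈ F by rw [← hec]; exact hee.2) hcF
        · rcases hTu with h | h | h
          · exact absurd (Finset.mem_inter.2 ⟨heeS, by rw [← h]; exact hee.1⟩ : ee ∈ tS ∩ T0)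
              (by rw [(hextra tS htS hTs).1]; exact Finset.notMem_empty ee)
          · exact absurd (Finset.mem_inter.2 ⟨heeS, by rw [← h]; exact hee.1⟩ : ee ∈ tS ∩ T1)
              (by rw [(hextra tS htS hTs).2]; exact Finset.notMem_empty ee)
          · exact h
      have h2T : t = T2 := haux t ht hTt hgt e he
      have h2T' : t' = T2 := haux t' ht' hTt' hgt' e' he'
      exact htt' (h2T.trans h2T'.symm)
    · intro L hL hTL hgL hgT2 ⟨e, he⟩
      rw [Finset.mem_inter] at he
      have heS : e ∈ tS := hFtS he.2
      have hLt : L ≠ tS := fun hc => hgL (by rw [hc]; exact hgtS)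
      rw [Finset.eq_empty_iff_forall_notMem]
      intro s hsmem
      rw [Finset.mem_sdiff, Finset.mem_inter] at hsmem
      by_cases hTs : tS = T0 ∨ tS = T1 ∨ tS = T2
      · rcases hTs with h | h | h
        · exact absurd (Finset.mem_inter.2 ⟨he.1, by rw [h] at heS; exact heS⟩ : e ∈ L ∩ T0)
            (by rw [(hextra L hL hTL).1]; exact Finset.notMem_empty e)
        · exact absurd (Finset.mem_inter.2 ⟨he.1, by rw [h] at heS; exact heS⟩ : e ∈ L ∩ T1)
            (by rw [(hextra L hL hTL).2]; exact Finset.notMem_empty e)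
        · -- tS = T2 : e, s ∈ L ∩ T2 so e = s, but e ∈ F, s ∉ F
          have hLT2 : L ≠ T2 := fun hc => hTL (Or.inr (Or.inr hc))
          have hes : e = s := tri_inter_subsingleton hL hT2 hLT2
            e (Finset.mem_inter.2 ⟨he.1, by rw [h] at heS; exact heS⟩)
            s (Finset.mem_inter.2 ⟨hsmem.1.1, hsmem.1.2⟩)
          exact hsmem.2 (by rw [← hes]; exact he.2)
      · have := hextra2 L hL tS htS hTL hTs hLt
        exact absurd (Finset.mem_inter.2 ⟨he.1, heS⟩ : e ∈ L ∩ tS)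
          (by rw [this]; exact Finset.notMem_empty e)
  · by_cases hcF : c ∈ F
    · by_cases h2 : ∃ L ∈ TriSets C, ¬(L = T0 ∨ L = T1 ∨ L = T2) ∧
          (L ∩ F).Nonempty ∧ ((L ∩ T2) \ F).Nonempty
      · obtain ⟨L0, hL0, hTL0, hhit0, g, hg⟩ := h2
        rw [Finset.mem_sdiff, Finset.mem_inter] at hg
        have hgL0 : g ∈ L0 := hg.1.1
        have hgT2mem : g ∈ T2 := hg.1.2
        have hgF : g ∉ F := hg.2
        have hg1 : g ≠ e₁ := fun h => hgF (by rw [h]; exact he1F)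
        have hg2 : g ≠ e₂ := fun h => hgF (by rw [h]; exact he2F)
        have hgC : g ∈ C := tri_edges_mem hL0 g hgL0
        refine bookScaffold he₁ he₂ hne hT0 hT1 hT2 hc0 hc1 hc2 hextra hextra2 hgC hg1 hg2
          (fun t ht _ hsub => h1 ⟨t, ht, hsub⟩) (fun hcF' => absurd hcF hcF')
          (fun L hL hTL hgL hgT2 _ => absurd hgT2mem hgT2)
      · obtain ⟨g, hgfree⟩ := hfree
        rw [Finset.mem_sdiff] at hgfree
        have hgC : g ∈ C := hgfree.1
        have hg1 : g ≠ e₁ := fun h => hgfree.2 (by rw [h]; exact he1F)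
        have hg2 : g ≠ e₂ := fun h => hgfree.2 (by rw [h]; exact he2F)
        refine bookScaffold he₁ he₂ hne hT0 hT1 hT2 hc0 hc1 hc2 hextra hextra2 hgC hg1 hg2
          (fun t ht _ hsub => h1 ⟨t, ht, hsub⟩) (fun hcF' => absurd hcF hcF') ?_
        intro L hL hTL hgL hgT2 hhit
        rw [Finset.eq_empty_iff_forall_notMem]
        intro s hsmem
        exact h2 ⟨L, hL, hTL, hhit, ⟨s, hsmem⟩⟩
    · -- c ∉ F : Breaker simply claims c, killing the whole book
      have hgC : c ∈ C := tri_edges_mem hT0 c hc0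
      have hg1 : c ≠ e₁ := fun h => hcF (by rw [h]; exact he1F)
      have hg2 : c ≠ e₂ := fun h => hcF (by rw [h]; exact he2F)
      refine bookScaffold he₁ he₂ hne hT0 hT1 hT2 hc0 hc1 hc2 hextra hextra2 hgC hg1 hg2
        (fun t ht _ hsub => h1 ⟨t, ht, hsub⟩) ?_
        (fun L hL hTL hgL hgT2 _ => absurd hc2 hgT2)
      intro _ t t' ht ht' hTt hTt' htt' hgt hgt' _
      have : c ∈ t := by rcases hTt with h | h | h <;> rw [h] <;> assumption
      exact hgt this

end BookCase2
section StarCase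

variable {V : Type*} [DecidableEq V]

open Classical

lemma sdiff_nonempty_of_inter_small {t X : Finset (Sym2 V)} (h3 : t.card = 3)
    (h : (t ∩ X).card ≤ 2) : (t \ X).Nonempty := by
  rw [← Finset.card_pos]
  have h1 : t \ X = t \ (t ∩ X) := by rw [Finset.sdiff_inter_self_left]
  rw [h1, Finset.card_sdiff_of_subset Finset.inter_subset_left, h3]
  omega

lemma hit_either {t F : Finset (Sym2 V)} {e₁ e₂ : Sym2 V} (hF : F = {e₁, e₂})
    (h : (t ∩ F).Nonempty) : e₁ ∈ t ∨ e₂ ∈ t := by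
  obtain ⟨e, he⟩ := h
  rw [Finset.mem_inter, hF] at he
  rcases Finset.mem_insert.1 he.2 with h' | h'
  · left; rw [← h']; exact he.1
  · rw [Finset.mem_singleton] at h'
    right; rw [← h']; exact he.1

lemma starScaffold {C : Finset (Sym2 V)} {e₁ e₂ : Sym2 V} {Z : Finset (Sym2 V)} {g : Sym2 V}
    (he₁ : e₁ ∈ C) (he₂ : e₂ ∈ C) (hne : e₁ ≠ e₂)
    (hZ : Z ∈ TriSets C)
    (hleaf : ∀ t ∈ TriSets C, ∀ t' ∈ TriSets C, t ≠ Z → t' ≠ Z → t ≠ t' → t ∩ t' = ∅)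
    (hgC : g ∈ C) (hg1 : g ≠ e₁) (hg2 : g ≠ e₂)
    (hnb : ∀ t ∈ TriSets C, g ∉ t → ¬ ({e₁, e₂} : Finset (Sym2 V)) ⊆ t)
    (hsafe : ∀ L ∈ TriSets C, L ≠ Z → g ∉ L →
      (L ∩ ({e₁, e₂} : Finset (Sym2 V))).Nonempty →
      ((L ∩ Z) \ ({e₁, e₂} : Finset (Sym2 V))).Nonempty →
      ∀ t' ∈ TriSets C, t' ≠ L → g ∉ t' →
      (t' ∩ ({e₁, e₂} : Finset (Sym2 V))).Nonempty → False) :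
    BreakerTurn C HasTriangle 1 {e₁, e₂} ∅ := by
  classical
  set F : Finset (Sym2 V) := {e₁, e₂} with hF
  set D : Finset (Sym2 V) → Finset (Sym2 V) :=
    fun t => if (t ∩ F).Nonempty then t ∩ F
      else if t = Z then Z.filter (fun s' => s' ∉ F ∧ ∃ u ∈ TriSets C, u ≠ Z ∧ g ∉ u ∧
        (u ∩ F).Nonempty ∧ s' ∈ u)
      else t ∩ Z with hD
  refine DtoPi he₁ he₂ hne hgC hg1 hg2 D ?_ ?_ ?_ ?_
  · intro t ht hgt
    simp only [hD]
    by_cases hHt : (t ∩ F).Nonempty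
    · rw [if_pos hHt]; exact Finset.inter_subset_left
    · rw [if_neg hHt]
      by_cases htZ : t = Z
      · rw [if_pos htZ, htZ]
        exact Finset.filter_subset _ _
      · rw [if_neg htZ]; exact Finset.inter_subset_left
  · intro t ht hgt
    simp only [hD]
    by_cases hHt : (t ∩ F).Nonempty
    · rw [if_pos hHt]
      exact hit_card_le_one (pair_card_two hne) (hnb t ht hgt)
    · rw [if_neg hHt]
      by_cases htZ : t = Z
      · rw [if_pos htZ]
        rw [Finset.card_le_one]
        intro a ha b hb
        rw [Finset.mem_filter] at ha hb
        obtain ⟨haZ, haF, u, hu, huZ, hgu, huhit, hau⟩ := ha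
        obtain ⟨hbZ, hbF, u', hu', hu'Z, hgu', hu'hit, hbu'⟩ := hb
        by_cases huu' : u = u'
        · refine tri_inter_subsingleton hu hZ huZ a ?_ b ?_
          · exact Finset.mem_inter.2 ⟨hau, haZ⟩
          · rw [huu']
            exact Finset.mem_inter.2 ⟨hbu', hbZ⟩
        · exact absurd huu' (fun _ => hsafe u hu huZ hgu huhit
            ⟨a, Finset.mem_sdiff.2 ⟨Finset.mem_inter.2 ⟨hau, haZ⟩, haF⟩⟩
            u' hu' (fun hc => huu' hc.symm) hgu' hu'hit)
      · rw [if_neg htZ]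
        exact tri_inter_card_le_one ht hZ htZ
  · intro t ht hgt
    simp only [hD]
    by_cases hHt : (t ∩ F).Nonempty
    · rw [if_pos hHt]
    · rw [if_neg hHt]
      rw [Finset.not_nonempty_iff_eq_empty] at hHt
      rw [hHt]
      exact Finset.empty_subset _
  · intro t ht t' ht' hgt hgt' htt' s hs hsF
    rw [Finset.mem_inter] at hs
    by_cases htZ : t = Z <;> by_cases ht'Z : t' = Z
    · exact absurd (htZ.trans ht'Z.symm) htt'
    · -- t = Z, t' a leaf
      by_cases hHt' : (t' ∩ F).Nonempty
      · -- t' hit; then Z must be clean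
        have hsh : ((t' ∩ Z) \ F).Nonempty :=
          ⟨s, Finset.mem_sdiff.2 ⟨Finset.mem_inter.2 ⟨hs.2, by rw [← htZ]; exact hs.1⟩, hsF⟩⟩
        have hHZ : ¬ (t ∩ F).Nonempty := by
          intro hc
          exact hsafe t' ht' ht'Z hgt' hHt' hsh t ht htt' hgt hc
        refine Finset.mem_union_left _ ?_
        simp only [hD, if_neg hHZ, if_pos htZ]
        rw [Finset.mem_filter]
        exact ⟨by rw [← htZ]; exact hs.1, hsF, t', ht', ht'Z, hgt', hHt', hs.2⟩
      · refine Finset.mem_union_right _ ?_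
        simp only [hD, if_neg hHt', if_neg ht'Z]
        exact Finset.mem_inter.2 ⟨hs.2, by rw [← htZ]; exact hs.1⟩
    · -- t a leaf, t' = Z
      by_cases hHt : (t ∩ F).Nonempty
      · have hsh : ((t ∩ Z) \ F).Nonempty :=
          ⟨s, Finset.mem_sdiff.2 ⟨Finset.mem_inter.2 ⟨hs.1, by rw [← ht'Z]; exact hs.2⟩, hsF⟩⟩
        have hHZ : ¬ (t' ∩ F).Nonempty := by
          intro hc
          exact hsafe t ht htZ hgt hHt hsh t' ht' (fun h => htt' h.symm) hgt' hc
        refine Finset.mem_union_right _ ?_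
        simp only [hD, if_neg hHZ, if_pos ht'Z]
        rw [Finset.mem_filter]
        exact ⟨by rw [← ht'Z]; exact hs.2, hsF, t, ht, htZ, hgt, hHt, hs.1⟩
      · refine Finset.mem_union_left _ ?_
        simp only [hD, if_neg hHt, if_neg htZ]
        exact Finset.mem_inter.2 ⟨hs.1, by rw [← ht'Z]; exact hs.2⟩
    · have := hleaf t ht t' ht' htZ ht'Z htt'
      exact absurd (Finset.mem_inter.2 ⟨hs.1, hs.2⟩ : s ∈ t ∩ t')
        (by rw [this]; exact Finset.notMem_empty s)

end StarCase
section StarCase2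

variable {V : Type*} [DecidableEq V]

open Classical

lemma starCase {C : Finset (Sym2 V)} {e₁ e₂ : Sym2 V} {Z : Finset (Sym2 V)}
    (he₁ : e₁ ∈ C) (he₂ : e₂ ∈ C) (hne : e₁ ≠ e₂)
    (hZ : Z ∈ TriSets C)
    (hleaf : ∀ t ∈ TriSets C, ∀ t' ∈ TriSets C, t ≠ Z → t' ≠ Z → t ≠ t' → t ∩ t' = ∅)
    (hfree : (C \ {e₁, e₂}).Nonempty) :
    BreakerTurn C HasTriangle 1 {e₁, e₂} ∅ := by
  classical
  set F : Finset (Sym2 V) := {e₁, e₂} with hF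
  have hFcard : F.card = 2 := pair_card_two hne
  have he1F : e₁ ∈ F := Finset.mem_insert_self _ _
  have he2F : e₂ ∈ F := by simp [hF]
  by_cases h1 : ∃ t ∈ TriSets C, F ⊆ t
  · obtain ⟨tS, htS, hFtS⟩ := h1
    have he1t : e₁ ∈ tS := hFtS he1F
    have he2t : e₂ ∈ tS := hFtS he2F
    obtain ⟨g, hg⟩ := tri_sdiff_pair_nonempty htS F (by omega)
    rw [Finset.mem_sdiff] at hg
    have hgtS : g ∈ tS := hg.1
    have hgF : g ∉ F := hg.2
    have hg1 : g ≠ e₁ := fun h => hgF (by rw [h]; exact he1F)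
    have hg2 : g ≠ e₂ := fun h => hgF (by rw [h]; exact he2F)
    have hgC : g ∈ C := tri_edges_mem htS g hgtS
    refine starScaffold he₁ he₂ hne hZ hleaf hgC hg1 hg2 ?_ ?_
    · intro t ht hgt hsub
      have : t = tS := tri_eq_of_two_shared ht htS hne
        (hsub he1F) he1t (hsub he2F) he2t
      exact hgt (by rw [this]; exact hgtS)
    · intro L hL hLZ hgL hhitL hshL t' ht' ht'L hgt' hhitt'
      obtain ⟨e, he⟩ := hhitL
      rw [Finset.mem_inter] at he
      have heS : e ∈ tS := hFtS he.2
      have hLt : L ≠ tS := fun hc => hgL (by rw [hc]; exact hgtS)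
      by_cases htSZ : tS = Z
      · obtain ⟨sL, hsL⟩ := hshL
        rw [Finset.mem_sdiff, Finset.mem_inter] at hsL
        have hes : e = sL := tri_inter_subsingleton hL hZ hLZ
          e (Finset.mem_inter.2 ⟨he.1, by rw [htSZ] at heS; exact heS⟩)
          sL (Finset.mem_inter.2 ⟨hsL.1.1, hsL.1.2⟩)
        exact hsL.2 (by rw [← hes]; exact he.2)
      · have := hleaf L hL tS htS hLZ htSZ hLt
        exact absurd (Finset.mem_inter.2 ⟨he.1, heS⟩ : e ∈ L ∩ tS)
          (by rw [this]; exact Finset.notMem_empty e)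
  · by_cases h2 : ∃ L ∈ TriSets C, L ≠ Z ∧ (L ∩ F).Nonempty ∧ ((L ∩ Z) \ F).Nonempty ∧
        ∃ t' ∈ TriSets C, t' ≠ L ∧ (t' ∩ F).Nonempty
    · obtain ⟨L0, hL0, hL0Z, hhit0, hsh0, -⟩ := h2
      have hcard0 : (L0 ∩ (F ∪ Z)).card ≤ 2 := by
        rw [Finset.inter_union_distrib_left]
        have h1' : (L0 ∩ F).card ≤ 1 :=
          hit_card_le_one hFcard (fun hc => h1 ⟨L0, hL0, hc⟩)
        have h2' : (L0 ∩ Z).card ≤ 1 := tri_inter_card_le_one hL0 hZ hL0Z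
        calc ((L0 ∩ F) ∪ (L0 ∩ Z)).card ≤ (L0 ∩ F).card + (L0 ∩ Z).card :=
              Finset.card_union_le _ _
          _ ≤ 2 := by omega
      obtain ⟨g, hg⟩ := sdiff_nonempty_of_inter_small (tri_card_of_mem hL0) hcard0
      rw [Finset.mem_sdiff] at hg
      have hgL0 : g ∈ L0 := hg.1
      have hgFZ := hg.2
      rw [Finset.mem_union] at hgFZ
      push_neg at hgFZ
      have hgF : g ∉ F := hgFZ.1
      have hgZ : g ∉ Z := hgFZ.2
      have hg1 : g ≠ e₁ := fun h => hgF (by rw [h]; exact he1F)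
      have hg2 : g ≠ e₂ := fun h => hgF (by rw [h]; exact he2F)
      have hgC : g ∈ C := tri_edges_mem hL0 g hgL0
      refine starScaffold he₁ he₂ hne hZ hleaf hgC hg1 hg2
        (fun t ht _ hsub => h1 ⟨t, ht, hsub⟩) ?_
      intro L hL hLZ hgL hhitL hshL t' ht' ht'L hgt' hhitt'
      have hLL0 : L ≠ L0 := fun hc => hgL (by rw [hc]; exact hgL0)
      have ht'L0 : t' ≠ L0 := fun hc => hgt' (by rw [hc]; exact hgL0)
      have hAB : ∀ e, e ∈ F → e ∈ L → e ∈ t' → False := by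
        intro e heF heL het'
        by_cases ht'Z : t' = Z
        · obtain ⟨sL, hsL⟩ := hshL
          rw [Finset.mem_sdiff, Finset.mem_inter] at hsL
          have hes : e = sL := tri_inter_subsingleton hL hZ hLZ
            e (Finset.mem_inter.2 ⟨heL, by rw [← ht'Z]; exact het'⟩)
            sL (Finset.mem_inter.2 ⟨hsL.1.1, hsL.1.2⟩)
          exact hsL.2 (by rw [← hes]; exact heF)
        · have := hleaf L hL t' ht' hLZ ht'Z (fun h => ht'L h.symm)
          exact absurd (Finset.mem_inter.2 ⟨heL, het'⟩ : e ∈ L ∩ t')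
            (by rw [this]; exact Finset.notMem_empty e)
      have hAL0 : ∀ e, e ∈ F → e ∈ L → e ∈ L0 → False := by
        intro e heF heL heL0
        have := hleaf L hL L0 hL0 hLZ hL0Z hLL0
        exact absurd (Finset.mem_inter.2 ⟨heL, heL0⟩ : e ∈ L ∩ L0)
          (by rw [this]; exact Finset.notMem_empty e)
      have hBL0 : ∀ e, e ∈ F → e ∈ t' → e ∈ L0 → False := by
        intro e heF het' heL0
        by_cases ht'Z : t' = Z
        · obtain ⟨s0, hs0⟩ := hsh0
          rw [Finset.mem_sdiff, Finset.mem_inter] at hs0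
          have hes : e = s0 := tri_inter_subsingleton hL0 hZ hL0Z
            e (Finset.mem_inter.2 ⟨heL0, by rw [← ht'Z]; exact het'⟩)
            s0 (Finset.mem_inter.2 ⟨hs0.1.1, hs0.1.2⟩)
          exact hs0.2 (by rw [← hes]; exact heF)
        · have := hleaf t' ht' L0 hL0 ht'Z hL0Z ht'L0
          exact absurd (Finset.mem_inter.2 ⟨het', heL0⟩ : e ∈ t' ∩ L0)
            (by rw [this]; exact Finset.notMem_empty e)
      rcases hit_either hF hhitL with hA | hA <;>
        rcases hit_either hF hhitt' with hB | hB <;>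
          rcases hit_either hF hhit0 with hC | hC <;>
            first
            | exact hAB _ he1F hA hB
            | exact hAB _ he2F hA hB
            | exact hAL0 _ he1F hA hC
            | exact hAL0 _ he2F hA hC
            | exact hBL0 _ he1F hB hC
            | exact hBL0 _ he2F hB hC
    · obtain ⟨g, hgfree⟩ := hfree
      rw [Finset.mem_sdiff] at hgfree
      have hgC : g ∈ C := hgfree.1
      have hg1 : g ≠ e₁ := fun h => hgfree.2 (by rw [h]; exact he1F)
      have hg2 : g ≠ e₂ := fun h => hgfree.2 (by rw [h]; exact he2F)
      refine starScaffold he₁ he₂ hne hZ hleaf hgC hg1 hg2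
        (fun t ht _ hsub => h1 ⟨t, ht, hsub⟩) ?_
      intro L hL hLZ hgL hhitL hshL t' ht' ht'L hgt' hhitt'
      exact h2 ⟨L, hL, hLZ, hhitL, hshL, t', ht', ht'L, hhitt'⟩

end StarCase2
section CommonEdge

variable {V : Type*} [DecidableEq V]

open Classical

lemma triEdges_perm12 {x y z : V} : triEdges x y z = triEdges y x z := by
  ext e
  rw [mem_triEdges_iff, mem_triEdges_iff]
  constructor <;> rintro (h | h | h) <;> simp [h, Sym2.eq_swap] <;> tauto

lemma triEdges_perm23 {x y z : V} : triEdges x y z = triEdges x z y := by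
  ext e
  rw [mem_triEdges_iff, mem_triEdges_iff]
  constructor <;> rintro (h | h | h) <;> simp [h, Sym2.eq_swap] <;> tauto

lemma triEdges_perm13 {x y z : V} : triEdges x y z = triEdges z y x := by
  ext e
  rw [mem_triEdges_iff, mem_triEdges_iff]
  constructor <;> rintro (h | h | h) <;> simp [h, Sym2.eq_swap] <;> tauto

lemma triEdges_rot {x y z : V} : triEdges x y z = triEdges y z x := by
  ext e
  rw [mem_triEdges_iff, mem_triEdges_iff]
  constructor <;> rintro (h | h | h) <;> simp [h, Sym2.eq_swap] <;> tauto

lemma triEdges_rot2 {x y z : V} : triEdges x y z = triEdges z x y := by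
  ext e
  rw [mem_triEdges_iff, mem_triEdges_iff]
  constructor <;> rintro (h | h | h) <;> simp [h, Sym2.eq_swap] <;> tauto

lemma isTri_perm12 {C : Finset (Sym2 V)} {x y z : V} (h : IsTriangleIn C x y z) :
    IsTriangleIn C y x z := by
  obtain ⟨hxy, hyz, hxz, h1, h2, h3⟩ := h
  exact ⟨hxy.symm, hxz, hyz, by rwa [Sym2.eq_swap], h3, h2⟩

lemma isTri_perm23 {C : Finset (Sym2 V)} {x y z : V} (h : IsTriangleIn C x y z) :
    IsTriangleIn C x z y := by
  obtain ⟨hxy, hyz, hxz, h1, h2, h3⟩ := h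
  exact ⟨hxz, hyz.symm, hxy, h3, by rwa [Sym2.eq_swap], h1⟩

lemma isTri_perm13 {C : Finset (Sym2 V)} {x y z : V} (h : IsTriangleIn C x y z) :
    IsTriangleIn C z y x := by
  obtain ⟨hxy, hyz, hxz, h1, h2, h3⟩ := h
  exact ⟨hyz.symm, hxy.symm, hxz.symm, by rwa [Sym2.eq_swap], by rwa [Sym2.eq_swap],
    by rwa [Sym2.eq_swap]⟩

lemma isTri_rot {C : Finset (Sym2 V)} {x y z : V} (h : IsTriangleIn C x y z) :
    IsTriangleIn C y z x := by
  obtain ⟨hxy, hyz, hxz, h1, h2, h3⟩ := h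
  exact ⟨hyz, hxz.symm, hxy.symm, h2, by rwa [Sym2.eq_swap], by rwa [Sym2.eq_swap]⟩

lemma isTri_rot2 {C : Finset (Sym2 V)} {x y z : V} (h : IsTriangleIn C x y z) :
    IsTriangleIn C z x y := by
  obtain ⟨hxy, hyz, hxz, h1, h2, h3⟩ := h
  exact ⟨hxz.symm, hxy, hyz.symm, by rwa [Sym2.eq_swap], h1, by rwa [Sym2.eq_swap]⟩

/-- Normalize two distinct edges of a triangle to the form `s(x,y)`, `s(x,z)`. -/
lemma tri_two_edges_normalize {C : Finset (Sym2 V)} {t : Finset (Sym2 V)}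
    (ht : t ∈ TriSets C) {a b : Sym2 V} (hab : a ≠ b) (hat : a ∈ t) (hbt : b ∈ t) :
    ∃ x y z : V, IsTriangleIn C x y z ∧ t = triEdges x y z ∧ a = s(x, y) ∧ b = s(x, z) := by
  obtain ⟨x, y, z, htri, rfl⟩ := ht
  rcases mem_triEdges_iff.1 hat with ha | ha | ha <;>
    rcases mem_triEdges_iff.1 hbt with hb | hb | hb
  · exact absurd (ha.trans hb.symm) hab
  · exact ⟨y, x, z, isTri_perm12 htri, triEdges_perm12, by rw [ha, Sym2.eq_swap], hb⟩
  · exact ⟨x, y, z, htri, rfl, ha, hb⟩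
  · exact ⟨y, z, x, isTri_rot htri, triEdges_rot, ha, by rw [hb, Sym2.eq_swap]⟩
  · exact absurd (ha.trans hb.symm) hab
  · exact ⟨z, y, x, isTri_perm13 htri, triEdges_perm13, by rw [ha, Sym2.eq_swap],
      by rw [hb, Sym2.eq_swap]⟩
  · exact ⟨x, z, y, isTri_perm23 htri, triEdges_perm23, ha, hb⟩
  · exact ⟨z, x, y, isTri_rot2 htri, triEdges_rot2, by rw [ha, Sym2.eq_swap],
      by rw [hb, Sym2.eq_swap]⟩
  · exact absurd (ha.trans hb.symm) hab

/-- A triangle containing the edge `s(a,b)` is `triEdges a b w` for some third vertex. -/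
lemma tri_of_edge_mem {C : Finset (Sym2 V)} {t : Finset (Sym2 V)} (ht : t ∈ TriSets C)
    {a b : V} (hab : a ≠ b) (he : s(a, b) ∈ t) :
    ∃ w : V, w ≠ a ∧ w ≠ b ∧ IsTriangleIn C a b w ∧ t = triEdges a b w := by
  obtain ⟨x, y, z, htri, rfl⟩ := ht
  have hd := htri
  obtain ⟨hxy, hyz, hxz, -, -, -⟩ := hd
  rcases mem_triEdges_iff.1 he with h | h | h <;> rw [Sym2.eq_iff] at h
  · rcases h with ⟨rfl, rfl⟩ | ⟨rfl, rfl⟩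
    · exact ⟨z, fun hc => hxz hc.symm, fun hc => hyz hc.symm, htri, rfl⟩
    · exact ⟨z, fun hc => hyz hc.symm, fun hc => hxz hc.symm, isTri_perm12 htri,
        triEdges_perm12⟩
  · rcases h with ⟨rfl, rfl⟩ | ⟨rfl, rfl⟩
    · exact ⟨x, fun hc => hxy hc, fun hc => hxz hc, isTri_rot htri, triEdges_rot⟩
    · exact ⟨x, fun hc => hxz hc, fun hc => hxy hc, isTri_perm13 htri, triEdges_perm13⟩
  · rcases h with ⟨rfl, rfl⟩ | ⟨rfl, rfl⟩
    · exact ⟨y, fun hc => hxy hc.symm, fun hc => hyz hc, isTri_perm23 htri,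
        triEdges_perm23⟩
    · exact ⟨y, fun hc => hyz hc, fun hc => hxy hc.symm, isTri_rot2 htri, triEdges_rot2⟩

lemma commonEdge {C : Finset (Sym2 V)} {t0 t1 t2 : Finset (Sym2 V)}
    (h0 : t0 ∈ TriSets C) (h1 : t1 ∈ TriSets C) (h2 : t2 ∈ TriSets C)
    (h01 : t0 ≠ t1) (h02 : t0 ≠ t2) (h12 : t1 ≠ t2)
    (hi01 : (t0 ∩ t1).Nonempty) (hi02 : (t0 ∩ t2).Nonempty) (hi12 : (t1 ∩ t2).Nonempty)
    (hno4 : ∀ t3 ∈ TriSets C, (t3 ∩ t0).Nonempty → (t3 ∩ t1).Nonempty →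
      (t3 ∩ t2).Nonempty → t3 = t0 ∨ t3 = t1 ∨ t3 = t2) :
    ∃ c : Sym2 V, c ∈ t0 ∧ c ∈ t1 ∧ c ∈ t2 := by
  obtain ⟨s01, hs01⟩ := hi01
  obtain ⟨s02, hs02⟩ := hi02
  obtain ⟨s12, hs12⟩ := hi12
  rw [Finset.mem_inter] at hs01 hs02 hs12
  by_cases hA : s01 = s02
  · exact ⟨s01, hs01.1, hs01.2, by rw [hA]; exact hs02.2⟩
  by_cases hB : s01 = s12
  · exact ⟨s01, hs01.1, hs01.2, by rw [hB]; exact hs12.2⟩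
  by_cases hC : s02 = s12
  · exact ⟨s02, hs02.1, by rw [hC]; exact hs12.1, hs02.2⟩
  exfalso
  -- normalize inside t0
  obtain ⟨x, y, z, htri0, ht0eq, ha, hb⟩ := tri_two_edges_normalize h0 hA hs01.1 hs02.1
  obtain ⟨hxy, hyz, hxz, hexy, heyz, hexz⟩ := htri0
  -- t1 contains s(x,y)
  obtain ⟨w, hwx, hwy, htri1, ht1eq⟩ := tri_of_edge_mem h1 hxy (by rw [← ha]; exact hs01.2)
  have hwz : w ≠ z := by
    intro hc
    rw [hc] at ht1eq
    exact h01 (ht0eq.trans ht1eq.symm)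
  -- t2 contains s(x,z)
  obtain ⟨v, hvx, hvz, htri2, ht2eq⟩ := tri_of_edge_mem h2 hxz (by rw [← hb]; exact hs02.2)
  have hvy : v ≠ y := by
    intro hc
    rw [hc] at ht2eq
    exact h02 (ht0eq.trans (ht2eq.trans triEdges_perm23.symm).symm)
  -- analyze s12
  have hs12t1 := hs12.1
  have hs12t2 := hs12.2
  rw [ht1eq] at hs12t1
  rw [ht2eq] at hs12t2
  have hs12a : s12 = s(y, w) ∨ s12 = s(x, w) := by
    rcases mem_triEdges_iff.1 hs12t1 with h | h | h
    · exact absurd (ha.trans h.symm) hB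
    · exact Or.inl h
    · exact Or.inr h
  have hs12b : s12 = s(z, v) ∨ s12 = s(x, v) := by
    rcases mem_triEdges_iff.1 hs12t2 with h | h | h
    · exact absurd (hb.trans h.symm) hC
    · exact Or.inl h
    · exact Or.inr h
  have hwv : w = v := by
    rcases hs12a with h | h <;> rcases hs12b with h' | h' <;>
      rw [h] at h' <;> rw [Sym2.eq_iff] at h'
    · rcases h' with ⟨h1', h2'⟩ | ⟨h1', h2'⟩
      · exact absurd h1' hyz
      · exact absurd h2' hwz
    · rcases h' with ⟨h1', h2'⟩ | ⟨h1', h2'⟩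
      · exact absurd h1' (fun hc => hxy hc.symm)
      · exact absurd h2' hwx
    · rcases h' with ⟨h1', h2'⟩ | ⟨h1', h2'⟩
      · exact absurd h1' hxz
      · exact absurd h1' (fun hc => hvx hc.symm)
    · rcases h' with ⟨h1', h2'⟩ | ⟨h1', h2'⟩
      · exact h2'
      · exact absurd h2' hwx
  subst hwv
  -- the fourth triangle on {y, z, w}
  have hyw : y ≠ w := fun hc => hwy hc.symm
  have hzw : z ≠ w := fun hc => hvz hc.symm
  have heyw : s(y, w) ∈ C := by
    have : s(y, w) ∈ triEdges x y w := by rw [mem_triEdges_iff]; exact Or.inr (Or.inl rfl)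
    rw [← ht1eq] at this
    exact tri_edges_mem h1 _ this
  have hezw : s(z, w) ∈ C := by
    have : s(z, w) ∈ triEdges x z w := by rw [mem_triEdges_iff]; exact Or.inr (Or.inl rfl)
    rw [← ht2eq] at this
    exact tri_edges_mem h2 _ this
  have htri3 : IsTriangleIn C y z w := ⟨hyz, hzw, hyw, heyz, hezw, heyw⟩
  have ht3mem : triEdges y z w ∈ TriSets C := ⟨y, z, w, htri3, rfl⟩
  have hi30 : (triEdges y z w ∩ t0).Nonempty := by
    refine ⟨s(y, z), Finset.mem_inter.2 ⟨by rw [mem_triEdges_iff]; exact Or.inl rfl, ?_⟩⟩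
    rw [ht0eq, mem_triEdges_iff]; exact Or.inr (Or.inl rfl)
  have hi31 : (triEdges y z w ∩ t1).Nonempty := by
    refine ⟨s(y, w), Finset.mem_inter.2 ⟨by rw [mem_triEdges_iff]; exact Or.inr (Or.inr rfl), ?_⟩⟩
    rw [ht1eq, mem_triEdges_iff]; exact Or.inr (Or.inl rfl)
  have hi32 : (triEdges y z w ∩ t2).Nonempty := by
    refine ⟨s(z, w), Finset.mem_inter.2 ⟨by rw [mem_triEdges_iff]; exact Or.inr (Or.inl rfl), ?_⟩⟩
    rw [ht2eq, mem_triEdges_iff]; exact Or.inr (Or.inl rfl)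
  have hxy' : s(x, y) ∉ triEdges y z w := by
    rw [mem_triEdges_iff]
    rintro (h | h | h) <;> rw [Sym2.eq_iff] at h <;>
      rcases h with ⟨h1', h2'⟩ | ⟨h1', h2'⟩ <;>
        first
        | exact hxy h1'
        | exact hxz h1'
        | exact hyz h2'
        | exact hyw h2'
        | exact hwx h1'.symm
  have hxz' : s(x, z) ∉ triEdges y z w := by
    rw [mem_triEdges_iff]
    rintro (h | h | h) <;> rw [Sym2.eq_iff] at h <;>
      rcases h with ⟨h1', h2'⟩ | ⟨h1', h2'⟩ <;>
        first
        | exact hxy h1'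
        | exact hxz h1'
        | exact hwx h1'.symm
  rcases hno4 (triEdges y z w) ht3mem hi30 hi31 hi32 with h | h | h
  · exact hxy' (by rw [h, ht0eq, mem_triEdges_iff]; exact Or.inl rfl)
  · exact hxy' (by rw [h, ht1eq, mem_triEdges_iff]; exact Or.inl rfl)
  · exact hxz' (by rw [h, ht2eq, mem_triEdges_iff]; exact Or.inl rfl)

end CommonEdge
section K3Glue

variable {V : Type*} [DecidableEq V]

instance K3plusAdj.decRel : DecidableRel K3plusAdj := fun a b =>
  decidable_of_iff ((a.val < 3 ∧ b.val < 3 ∧ a ≠ b) ∨ (a.val = 2 ∧ b.val = 3) ∨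
    (a.val = 3 ∧ b.val = 2)) (by rw [K3plusAdj])

lemma k3_no4 : ∀ a b c d : Fin 4, a ≠ b → a ≠ c → a ≠ d → b ≠ c → b ≠ d → c ≠ d →
    K3plusAdj a b → K3plusAdj a c → K3plusAdj a d → K3plusAdj b c → K3plusAdj b d →
    K3plusAdj c d → False := by decide

lemma k3_tri_vals : ∀ a b c : Fin 4, a ≠ b → b ≠ c → a ≠ c →
    K3plusAdj a b → K3plusAdj a c → K3plusAdj b c → a ≠ 3 ∧ b ≠ 3 ∧ c ≠ 3 := by decide

lemma k3_fourth : ∀ a b c d : Fin 4, (a ≠ b ∧ b ≠ c ∧ a ≠ c ∧ a ≠ 3 ∧ b ≠ 3 ∧ c ≠ 3 ∧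
    d ≠ a ∧ d ≠ b ∧ d ≠ c) → d = 3 := by decide

lemma k3_adj3 : ∀ a : Fin 4, K3plusAdj 3 a → a = 2 := by decide

lemma k3_one_is2 : ∀ a b c : Fin 4, a ≠ b → b ≠ c → a ≠ c → a ≠ 3 → b ≠ 3 → c ≠ 3 →
    a = 2 ∨ b = 2 ∨ c = 2 := by decide

lemma k3_adj_cases : ∀ a b : Fin 4, K3plusAdj a b →
    (a = 0 ∧ b = 1) ∨ (a = 1 ∧ b = 0) ∨ (a = 0 ∧ b = 2) ∨ (a = 2 ∧ b = 0) ∨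
    (a = 1 ∧ b = 2) ∨ (a = 2 ∧ b = 1) ∨ (a = 2 ∧ b = 3) ∨ (a = 3 ∧ b = 2) := by decide

lemma fin_ne01 : (0 : Fin 4) ≠ 1 := by decide
lemma fin_ne02 : (0 : Fin 4) ≠ 2 := by decide
lemma fin_ne12 : (1 : Fin 4) ≠ 2 := by decide

lemma k3plusGlue {C : Finset (Sym2 V)} {e₁ e₂ : Sym2 V}
    (φ : TriSets C → Fin 4) (hφinj : Function.Injective φ)
    (hφadj : ∀ t t' : TriSets C, t ≠ t' →
      ((t : Finset (Sym2 V)) ∩ (t' : Finset (Sym2 V))).Nonempty → K3plusAdj (φ t) (φ t'))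
    (he₁ : e₁ ∈ C) (he₂ : e₂ ∈ C) (hne : e₁ ≠ e₂)
    (hfree : (C \ {e₁, e₂}).Nonempty) :
    BreakerTurn C HasTriangle 1 {e₁, e₂} ∅ := by
  classical
  -- basic translation helpers
  have hsub_ne : ∀ {t t' : Finset (Sym2 V)} (h : t ∈ TriSets C) (h' : t' ∈ TriSets C),
      t ≠ t' → (⟨t, h⟩ : TriSets C) ≠ ⟨t', h'⟩ := by
    intro t t' h h' hne' hc
    exact hne' (congrArg Subtype.val hc)
  have hval_ne : ∀ {t t' : Finset (Sym2 V)} (h : t ∈ TriSets C) (h' : t' ∈ TriSets C),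
      t ≠ t' → φ ⟨t, h⟩ ≠ φ ⟨t', h'⟩ := by
    intro t t' h h' hne' hc
    exact hne' (congrArg Subtype.val (hφinj hc))
  have heqφ : ∀ {t t' : Finset (Sym2 V)} (h : t ∈ TriSets C) (h' : t' ∈ TriSets C),
      φ ⟨t, h⟩ = φ ⟨t', h'⟩ → t = t' := by
    intro t t' h h' hc
    exact congrArg Subtype.val (hφinj hc)
  by_cases hK3 : ∃ u0, ∃ h0 : u0 ∈ TriSets C, ∃ u1, ∃ h1 : u1 ∈ TriSets C,
      ∃ u2, ∃ h2 : u2 ∈ TriSets C, u0 ≠ u1 ∧ u0 ≠ u2 ∧ u1 ≠ u2 ∧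
      (u0 ∩ u1).Nonempty ∧ (u0 ∩ u2).Nonempty ∧ (u1 ∩ u2).Nonempty
  · obtain ⟨u0, h0, u1, h1, u2, h2, h01, h02, h12, hi01, hi02, hi12⟩ := hK3
    have hno4 : ∀ t3 ∈ TriSets C, (t3 ∩ u0).Nonempty → (t3 ∩ u1).Nonempty →
        (t3 ∩ u2).Nonempty → t3 = u0 ∨ t3 = u1 ∨ t3 = u2 := by
      intro t3 h3 hi30 hi31 hi32
      by_contra hc
      push_neg at hc
      obtain ⟨hc0, hc1, hc2⟩ := hc
      exact k3_no4 (φ ⟨t3, h3⟩) (φ ⟨u0, h0⟩) (φ ⟨u1, h1⟩) (φ ⟨u2, h2⟩)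
        (hval_ne h3 h0 hc0) (hval_ne h3 h1 hc1) (hval_ne h3 h2 hc2)
        (hval_ne h0 h1 h01) (hval_ne h0 h2 h02) (hval_ne h1 h2 h12)
        (hφadj _ _ (hsub_ne h3 h0 hc0) hi30) (hφadj _ _ (hsub_ne h3 h1 hc1) hi31)
        (hφadj _ _ (hsub_ne h3 h2 hc2) hi32) (hφadj _ _ (hsub_ne h0 h1 h01) hi01)
        (hφadj _ _ (hsub_ne h0 h2 h02) hi02) (hφadj _ _ (hsub_ne h1 h2 h12) hi12)
    obtain ⟨c, hc0', hc1', hc2'⟩ := commonEdge h0 h1 h2 h01 h02 h12 hi01 hi02 hi12 hno4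
    have hvals := k3_tri_vals (φ ⟨u0, h0⟩) (φ ⟨u1, h1⟩) (φ ⟨u2, h2⟩)
      (hval_ne h0 h1 h01) (hval_ne h1 h2 h12) (hval_ne h0 h2 h02)
      (hφadj _ _ (hsub_ne h0 h1 h01) hi01) (hφadj _ _ (hsub_ne h0 h2 h02) hi02)
      (hφadj _ _ (hsub_ne h1 h2 h12) hi12)
    -- extras are at position 3 and intersect only the triangle at position 2
    have hextra_gen : ∀ t, ∀ h : t ∈ TriSets C, t ≠ u0 → t ≠ u1 → t ≠ u2 →
        ∀ u, ∀ hu : u ∈ TriSets C, (u = u0 ∨ u = u1 ∨ u = u2) → φ ⟨u, hu⟩ ≠ 2 →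
        t ∩ u = ∅ := by
      intro t h ht0 ht1 ht2 u hu huTriple hu2
      rw [← Finset.not_nonempty_iff_eq_empty]
      intro hint
      have ht3 : φ ⟨t, h⟩ = 3 := k3_fourth _ _ _ _
        ⟨hval_ne h0 h1 h01, hval_ne h1 h2 h12, hval_ne h0 h2 h02,
          hvals.1, hvals.2.1, hvals.2.2,
          hval_ne h h0 ht0, hval_ne h h1 ht1, hval_ne h h2 ht2⟩
      have htu : t ≠ u := by
        rintro rfl
        rcases huTriple with rfl | rfl | rfl
        · exact ht0 rfl
        · exact ht1 rfl
        · exact ht2 rfl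
      have hadj := hφadj _ _ (hsub_ne h hu htu) hint
      rw [ht3] at hadj
      exact hu2 (k3_adj3 _ hadj)
    have hextra2_gen : ∀ t, ∀ h : t ∈ TriSets C, ∀ t', ∀ h' : t' ∈ TriSets C,
        t ≠ u0 → t ≠ u1 → t ≠ u2 → t' ≠ u0 → t' ≠ u1 → t' ≠ u2 → t ≠ t' → t ∩ t' = ∅ := by
      intro t h t' h' ht0 ht1 ht2 ht0' ht1' ht2' htt'
      exfalso
      have ht3 : φ ⟨t, h⟩ = 3 := k3_fourth _ _ _ _
        ⟨hval_ne h0 h1 h01, hval_ne h1 h2 h12, hval_ne h0 h2 h02,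
          hvals.1, hvals.2.1, hvals.2.2,
          hval_ne h h0 ht0, hval_ne h h1 ht1, hval_ne h h2 ht2⟩
      have ht3' : φ ⟨t', h'⟩ = 3 := k3_fourth _ _ _ _
        ⟨hval_ne h0 h1 h01, hval_ne h1 h2 h12, hval_ne h0 h2 h02,
          hvals.1, hvals.2.1, hvals.2.2,
          hval_ne h' h0 ht0', hval_ne h' h1 ht1', hval_ne h' h2 ht2'⟩
      exact htt' (heqφ h h' (ht3.trans ht3'.symm))
    rcases k3_one_is2 (φ ⟨u0, h0⟩) (φ ⟨u1, h1⟩) (φ ⟨u2, h2⟩)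
        (hval_ne h0 h1 h01) (hval_ne h1 h2 h12) (hval_ne h0 h2 h02)
        hvals.1 hvals.2.1 hvals.2.2 with hw | hw | hw
    · -- u0 is the center
      refine bookCase (T0 := u1) (T1 := u2) (T2 := u0) he₁ he₂ hne h1 h2 h0
        hc1' hc2' hc0' ?_ ?_ hfree
      · intro t ht hTt
        push_neg at hTt
        refine ⟨hextra_gen t ht hTt.2.2 hTt.1 hTt.2.1 u1 h1 (Or.inr (Or.inl rfl)) ?_,
          hextra_gen t ht hTt.2.2 hTt.1 hTt.2.1 u2 h2 (Or.inr (Or.inr rfl)) ?_⟩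
        · rw [← hw]
          exact fun hcc => hval_ne h1 h0 (Ne.symm h01) hcc
        · rw [← hw]
          exact fun hcc => hval_ne h2 h0 (Ne.symm h02) hcc
      · intro t ht t' ht' hTt hTt' htt'
        push_neg at hTt hTt'
        exact hextra2_gen t ht t' ht' hTt.2.2 hTt.1 hTt.2.1
          hTt'.2.2 hTt'.1 hTt'.2.1 htt'
    · -- u1 is the center
      refine bookCase (T0 := u0) (T1 := u2) (T2 := u1) he₁ he₂ hne h0 h2 h1
        hc0' hc2' hc1' ?_ ?_ hfree
      · intro t ht hTt
        push_neg at hTt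
        refine ⟨hextra_gen t ht hTt.1 hTt.2.2 hTt.2.1 u0 h0 (Or.inl rfl) ?_,
          hextra_gen t ht hTt.1 hTt.2.2 hTt.2.1 u2 h2 (Or.inr (Or.inr rfl)) ?_⟩
        · rw [← hw]
          exact fun hcc => hval_ne h0 h1 h01 hcc
        · rw [← hw]
          exact fun hcc => hval_ne h2 h1 (Ne.symm h12) hcc
      · intro t ht t' ht' hTt hTt' htt'
        push_neg at hTt hTt'
        exact hextra2_gen t ht t' ht' hTt.1 hTt.2.2 hTt.2.1
          hTt'.1 hTt'.2.2 hTt'.2.1 htt'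
    · -- u2 is the center
      refine bookCase (T0 := u0) (T1 := u1) (T2 := u2) he₁ he₂ hne h0 h1 h2
        hc0' hc1' hc2' ?_ ?_ hfree
      · intro t ht hTt
        push_neg at hTt
        refine ⟨hextra_gen t ht hTt.1 hTt.2.1 hTt.2.2 u0 h0 (Or.inl rfl) ?_,
          hextra_gen t ht hTt.1 hTt.2.1 hTt.2.2 u1 h1 (Or.inr (Or.inl rfl)) ?_⟩
        · rw [← hw]
          exact fun hcc => hval_ne h0 h2 h02 hcc
        · rw [← hw]
          exact fun hcc => hval_ne h1 h2 h12 hcc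
      · intro t ht t' ht' hTt hTt' htt'
        push_neg at hTt hTt'
        exact hextra2_gen t ht t' ht' hTt.1 hTt.2.1 hTt.2.2
          hTt'.1 hTt'.2.1 hTt'.2.2 htt'
  · -- no triangle in the intersection graph
    set P : Fin 4 → Fin 4 → Prop := fun i j => ∃ t, ∃ h : t ∈ TriSets C, ∃ t',
      ∃ h' : t' ∈ TriSets C, φ ⟨t, h⟩ = i ∧ φ ⟨t', h'⟩ = j ∧ (t ∩ t').Nonempty with hP
    have hPelim : ∀ {t t' : Finset (Sym2 V)} (h : t ∈ TriSets C) (h' : t' ∈ TriSets C)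
        {i j : Fin 4}, φ ⟨t, h⟩ = i → φ ⟨t', h'⟩ = j → (t ∩ t').Nonempty → P i j := by
      intro t t' h h' i j hi hj hint
      exact ⟨t, h, t', h', hi, hj, hint⟩
    by_cases hStar : P 0 2 ∧ P 1 2 ∧ P 2 3
    · -- star case
      obtain ⟨⟨a0, ha0, z, hz, ha0v, hzv, hi0z⟩, hP12, hP23⟩ := hStar
      refine starCase (Z := z) he₁ he₂ hne hz ?_ hfree
      intro t ht t' ht' htz ht'z htt'
      rw [← Finset.not_nonempty_iff_eq_empty]
      intro hint
      have hadj := hφadj _ _ (hsub_ne ht ht' htt') hint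
      have htv : φ ⟨t, ht⟩ ≠ 2 := by
        rw [← hzv]
        exact fun hcc => htz (heqφ ht hz hcc)
      have ht'v : φ ⟨t', ht'⟩ ≠ 2 := by
        rw [← hzv]
        exact fun hcc => ht'z (heqφ ht' hz hcc)
      obtain ⟨b1, hb1, z', hz', hb1v, hz'v, hi1z⟩ := hP12
      have hzz' : z' = z := heqφ hz' hz (hz'v.trans hzv.symm)
      rw [hzz'] at hi1z
      rcases k3_adj_cases _ _ hadj with ⟨hA, hB⟩ | ⟨hA, hB⟩ | ⟨hA, hB⟩ | ⟨hA, hB⟩ |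
        ⟨hA, hB⟩ | ⟨hA, hB⟩ | ⟨hA, hB⟩ | ⟨hA, hB⟩
      · -- φ t = 0, φ t' = 1
        have ht_a0 : t = a0 := heqφ ht ha0 (hA.trans ha0v.symm)
        have ht'_b1 : t' = b1 := heqφ ht' hb1 (hB.trans hb1v.symm)
        refine hK3 ⟨t, ht, t', ht', z, hz, htt', htz, ht'z, hint, ?_, ?_⟩
        · rw [ht_a0]; exact hi0z
        · rw [ht'_b1]; exact hi1z
      · -- φ t = 1, φ t' = 0
        have ht_b1 : t = b1 := heqφ ht hb1 (hA.trans hb1v.symm)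
        have ht'_a0 : t' = a0 := heqφ ht' ha0 (hB.trans ha0v.symm)
        refine hK3 ⟨t, ht, t', ht', z, hz, htt', htz, ht'z, hint, ?_, ?_⟩
        · rw [ht_b1]; exact hi1z
        · rw [ht'_a0]; exact hi0z
      · exact ht'v hB
      · exact htv hA
      · exact ht'v hB
      · exact htv hA
      · exact htv hA
      · exact ht'v hB
    · -- path-shaped: choose a relabeling of Fin 4 into ℕ
      by_cases hb02 : P 0 2
      · by_cases hb12 : P 1 2
        · -- b02 ∧ b12 present: b23 absent (star excluded), b01 absent (K3 excluded)
          have hnb23 : ¬ P 2 3 := fun hc => hStar ⟨hb02, hb12, hc⟩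
          have hnb01 : ¬ P 0 1 := by
            rintro ⟨t, ht, t', ht', h0v, h1v, hint⟩
            obtain ⟨a0, ha0, z, hz, ha0v, hzv, hi0z⟩ := hb02
            obtain ⟨b1, hb1, z', hz', hb1v, hz'v, hi1z⟩ := hb12
            have hzz' : z' = z := heqφ hz' hz (hz'v.trans hzv.symm)
            rw [hzz'] at hi1z
            have ht_a0 : t = a0 := heqφ ht ha0 (h0v.trans ha0v.symm)
            have ht'_b1 : t' = b1 := heqφ ht' hb1 (h1v.trans hb1v.symm)
            have htt' : t ≠ t' := by
              intro hcc
              have hsame : (⟨t, ht⟩ : TriSets C) = ⟨t', ht'⟩ := Subtype.ext hcc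
              rw [hsame, h1v] at h0v
              exact fin_ne01 h0v.symm
            have htz : t ≠ z := by
              intro hcc
              have hsame : (⟨t, ht⟩ : TriSets C) = ⟨z, hz⟩ := Subtype.ext hcc
              rw [hsame, hzv] at h0v
              exact fin_ne02 h0v.symm
            have ht'z : t' ≠ z := by
              intro hcc
              have hsame : (⟨t', ht'⟩ : TriSets C) = ⟨z, hz⟩ := Subtype.ext hcc
              rw [hsame, hzv] at h1v
              exact fin_ne12 h1v.symm
            refine hK3 ⟨t, ht, t', ht', z, hz, htt', htz, ht'z, hint, ?_, ?_⟩
            · rw [ht_a0]; exact hi0z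
            · rw [ht'_b1]; exact hi1z
          have hrinj : ∀ a b : Fin 4, (![0, 2, 1, 4] : Fin 4 → ℕ) a =
              (![0, 2, 1, 4] : Fin 4 → ℕ) b → a = b := by decide
          refine pathCase he₁ he₂ hne (pos := fun t => if h : t ∈ TriSets C then
            ((![0, 2, 1, 4] : Fin 4 → ℕ) (φ ⟨t, h⟩)) else 0) ⟨?_, ?_⟩ hfree
          · intro t ht t' ht' heq
            simp only [dif_pos ht, dif_pos ht'] at heq
            exact heqφ ht ht' (hrinj _ _ heq)
          · intro t ht t' ht' hne' hint
            simp only [dif_pos ht, dif_pos ht']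
            have hadj := hφadj _ _ (hsub_ne ht ht' hne') hint
            rcases k3_adj_cases _ _ hadj with ⟨hA, hB⟩ | ⟨hA, hB⟩ | ⟨hA, hB⟩ | ⟨hA, hB⟩ |
              ⟨hA, hB⟩ | ⟨hA, hB⟩ | ⟨hA, hB⟩ | ⟨hA, hB⟩ <;> rw [hA, hB]
            · exact absurd (hPelim ht ht' hA hB hint) hnb01
            · exact absurd (hPelim ht' ht hB hA (by rwa [Finset.inter_comm])) hnb01
            · left; rfl
            · right; rfl
            · right; rfl
            · left; rfl
            · exact absurd (hPelim ht ht' hA hB hint) hnb23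
            · exact absurd (hPelim ht' ht hB hA (by rwa [Finset.inter_comm])) hnb23
        · -- b02 present, b12 absent
          have hrinj : ∀ a b : Fin 4, (![1, 0, 2, 3] : Fin 4 → ℕ) a =
              (![1, 0, 2, 3] : Fin 4 → ℕ) b → a = b := by decide
          refine pathCase he₁ he₂ hne (pos := fun t => if h : t ∈ TriSets C then
            ((![1, 0, 2, 3] : Fin 4 → ℕ) (φ ⟨t, h⟩)) else 0) ⟨?_, ?_⟩ hfree
          · intro t ht t' ht' heq
            simp only [dif_pos ht, dif_pos ht'] at heq
            exact heqφ ht ht' (hrinj _ _ heq)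
          · intro t ht t' ht' hne' hint
            simp only [dif_pos ht, dif_pos ht']
            have hadj := hφadj _ _ (hsub_ne ht ht' hne') hint
            rcases k3_adj_cases _ _ hadj with ⟨hA, hB⟩ | ⟨hA, hB⟩ | ⟨hA, hB⟩ | ⟨hA, hB⟩ |
              ⟨hA, hB⟩ | ⟨hA, hB⟩ | ⟨hA, hB⟩ | ⟨hA, hB⟩ <;> rw [hA, hB]
            · right; rfl
            · left; rfl
            · left; rfl
            · right; rfl
            · exact absurd (hPelim ht ht' hA hB hint) hb12
            · exact absurd (hPelim ht' ht hB hA (by rwa [Finset.inter_comm])) hb12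
            · left; rfl
            · right; rfl
      · -- b02 absent: identity relabeling
        have hrinj : ∀ a b : Fin 4, (![0, 1, 2, 3] : Fin 4 → ℕ) a =
            (![0, 1, 2, 3] : Fin 4 → ℕ) b → a = b := by decide
        refine pathCase he₁ he₂ hne (pos := fun t => if h : t ∈ TriSets C then
          ((![0, 1, 2, 3] : Fin 4 → ℕ) (φ ⟨t, h⟩)) else 0) ⟨?_, ?_⟩ hfree
        · intro t ht t' ht' heq
          simp only [dif_pos ht, dif_pos ht'] at heq
          exact heqφ ht ht' (hrinj _ _ heq)
        · intro t ht t' ht' hne' hint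
          simp only [dif_pos ht, dif_pos ht']
          have hadj := hφadj _ _ (hsub_ne ht ht' hne') hint
          rcases k3_adj_cases _ _ hadj with ⟨hA, hB⟩ | ⟨hA, hB⟩ | ⟨hA, hB⟩ | ⟨hA, hB⟩ |
            ⟨hA, hB⟩ | ⟨hA, hB⟩ | ⟨hA, hB⟩ | ⟨hA, hB⟩ <;> rw [hA, hB]
          · left; rfl
          · right; rfl
          · exact absurd (hPelim ht ht' hA hB hint) hb02
          · exact absurd (hPelim ht' ht hB hA (by rwa [Finset.inter_comm])) hb02
          · left; rfl
          · right; rfl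
          · left; rfl
          · right; rfl

end K3Glue
/-- On a very basic graph, Breaker prevents triangles even if Maker
claims two edges in her very first move. -/
theorem very_basic_breaker_blocks {V : Type*} [DecidableEq V]
    (C : Finset (Sym2 V)) (hC : VeryBasic C) :
    ∀ e₁ ∈ C, ∀ e₂ ∈ C, e₁ ≠ e₂ →
      BreakerTurn C HasTriangle 1 {e₁, e₂} ∅ := by
  intro e₁ he₁ e₂ he₂ hne
  by_cases hfree : (C \ {e₁, e₂}).Nonempty
  · rcases hC with ⟨φ, hinj, hadj⟩ | ⟨m, φ, hinj, hadj⟩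
    · exact k3plusGlue φ hinj hadj he₁ he₂ hne hfree
    · exact pathGlue φ hinj hadj he₁ he₂ hne hfree
  · exact degenerateCase he₁ he₂ hne (Finset.not_nonempty_iff_eq_empty.1 hfree)

end TournamentGame
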